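/- arXiv:1306.3260 — 9 statements merged into one kernel-verified Lean document; each statement's English description precedes it below -/
import Mathlib

section
/- Let M be a monoid and suppose x, y ∈ M satisfy x·y = 1 and y·x ≠ 1. Then the submonoid of M generated by {x, y} is isomorphic (as a monoid) to the bicyclic monoid B. -/
namespace Paper

/-- Defining relation of the bicyclic monoid: the word `x·x̄` is identified with the
empty word. The generator `x` is `FreeMonoid.of 0`, and `x̄` is `FreeMonoid.of 1`. -/
def BicyclicRel : FreeMonoid (Fin 2) → FreeMonoid (Fin 2) → Prop :=
  fun a b => a = FreeMonoid.of 0 * FreeMonoid.of 1 ∧ b = 1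

/-- The bicyclic monoid `B`: the quotient of the free monoid on two generators by the
smallest monoid congruence identifying `x·x̄` with the empty word. -/
def Bicyclic : Type := (conGen BicyclicRel).Quotient

instance : Monoid Bicyclic := inferInstanceAs (Monoid (conGen BicyclicRel).Quotient)

section Aux
variable {M : Type*} [Monoid M] {x y : M}

lemma pow_mul_pow_cancel (hxy : x * y = 1) : ∀ k, x ^ k * y ^ k = 1
  | 0 => by simp
  | k + 1 => by
    have ih := pow_mul_pow_cancel hxy k
    rw [pow_succ, pow_succ', mul_assoc, ← mul_assoc x, hxy, one_mul, ih]

lemma key (hxy : x * y = 1) (hyx : y * x ≠ 1) :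
    ∀ a b, y ^ a * x ^ b = 1 → a = 0 ∧ b = 0 := by
  intro a
  induction a with
  | zero =>
    intro b hb
    cases b with
    | zero => exact ⟨rfl, rfl⟩
    | succ c =>
      exfalso; apply hyx
      simp only [pow_zero, one_mul] at hb
      have hyc : y = x ^ c := by
        calc y = 1 * y := (one_mul y).symm
          _ = x ^ (c + 1) * y := by rw [hb]
          _ = x ^ c * (x * y) := by rw [pow_succ, mul_assoc]
          _ = x ^ c := by rw [hxy, mul_one]
      rw [hyc, ← pow_succ]
      exact hb
  | succ a ih =>
    intro b hb
    cases b with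
    | zero =>
      exfalso; apply hyx
      simp only [pow_zero, mul_one] at hb
      have hx : x = y ^ a := by
        calc x = x * 1 := (mul_one x).symm
          _ = x * y ^ (a + 1) := by rw [hb]
          _ = (x * y) * y ^ a := by rw [pow_succ', ← mul_assoc]
          _ = y ^ a := by rw [hxy, one_mul]
      rw [hx, ← pow_succ']
      exact hb
    | succ c =>
      have h3 : x * y ^ (a + 1) = y ^ a := by
        rw [pow_succ', ← mul_assoc, hxy, one_mul]
      have h4 : x ^ (c + 1) * y = x ^ c := by
        rw [pow_succ, mul_assoc, hxy, mul_one]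
      have h2 : y ^ a * x ^ c = 1 := by
        calc y ^ a * x ^ c = (x * y ^ (a + 1)) * (x ^ (c + 1) * y) := by rw [h3, h4]
          _ = x * (y ^ (a + 1) * x ^ (c + 1)) * y := by simp only [mul_assoc]
          _ = x * 1 * y := by rw [hb]
          _ = 1 := by rw [mul_one, hxy]
      obtain ⟨ha, hc⟩ := ih c h2
      subst ha; subst hc
      rw [zero_add, pow_one, pow_one] at hb
      exact absurd hb hyx

lemma uniq_aux (hxy : x * y = 1) (hyx : y * x ≠ 1) {m n p q : ℕ} (hmp : m ≤ p)
    (h : y ^ m * x ^ n = y ^ p * x ^ q) : m = p ∧ n = q := by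
  obtain ⟨d, rfl⟩ := Nat.exists_eq_add_of_le hmp
  have hxm : x ^ m * y ^ m = 1 := pow_mul_pow_cancel hxy m
  have h1 : x ^ n = y ^ d * x ^ q := by
    calc x ^ n = x ^ m * y ^ m * x ^ n := by rw [hxm, one_mul]
      _ = x ^ m * (y ^ m * x ^ n) := by rw [mul_assoc]
      _ = x ^ m * (y ^ (m + d) * x ^ q) := by rw [h]
      _ = (x ^ m * y ^ m) * y ^ d * x ^ q := by rw [pow_add]; simp only [mul_assoc]
      _ = y ^ d * x ^ q := by rw [hxm, one_mul]
  rcases le_total n q with hnq | hqn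
  · obtain ⟨e, rfl⟩ := Nat.exists_eq_add_of_le hnq
    have hxe : x ^ e * x ^ n = x ^ (n + e) := by rw [← pow_add, Nat.add_comm]
    have h2 : y ^ d * x ^ e = 1 := by
      have hn := pow_mul_pow_cancel hxy n
      calc y ^ d * x ^ e = y ^ d * x ^ e * (x ^ n * y ^ n) := by rw [hn, mul_one]
        _ = y ^ d * (x ^ e * x ^ n) * y ^ n := by simp only [mul_assoc]
        _ = y ^ d * x ^ (n + e) * y ^ n := by rw [hxe]
        _ = x ^ n * y ^ n := by rw [← h1]
        _ = 1 := hn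
    obtain ⟨hd, he⟩ := key hxy hyx d e h2
    subst hd; subst he; simp
  · obtain ⟨e, rfl⟩ := Nat.exists_eq_add_of_le hqn
    have h2 : y ^ (d + e) * x ^ 0 = 1 := by
      rw [pow_zero, mul_one, pow_add]
      calc y ^ d * y ^ e = y ^ d * (x ^ q * y ^ q) * y ^ e := by
            rw [pow_mul_pow_cancel hxy q, mul_one]
        _ = y ^ d * x ^ q * (y ^ q * y ^ e) := by simp only [mul_assoc]
        _ = x ^ (q + e) * y ^ (q + e) := by rw [← h1, ← pow_add]
        _ = 1 := pow_mul_pow_cancel hxy (q + e)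
    obtain ⟨hde, -⟩ := key hxy hyx (d + e) 0 h2
    have hd : d = 0 := by omega
    have he : e = 0 := by omega
    subst hd; subst he; simp

lemma uniq (hxy : x * y = 1) (hyx : y * x ≠ 1) {m n p q : ℕ}
    (h : y ^ m * x ^ n = y ^ p * x ^ q) : m = p ∧ n = q := by
  rcases le_total m p with hmp | hpm
  · exact uniq_aux hxy hyx hmp h
  · obtain ⟨h1, h2⟩ := uniq_aux hxy hyx hpm h.symm
    exact ⟨h1.symm, h2.symm⟩

end Aux

section BicyclicSide

open FreeMonoid

/-- The quotient map onto the bicyclic monoid, as a monoid hom. -/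
def q : FreeMonoid (Fin 2) →* Bicyclic := Con.mk' (conGen BicyclicRel)

lemma q_surjective : Function.Surjective q := Con.mk'_surjective

lemma q_rel : q (FreeMonoid.of 0) * q (FreeMonoid.of 1) = 1 := by
  rw [← map_mul, show (1 : Bicyclic) = q 1 from (map_one q).symm]
  have h : conGen BicyclicRel (FreeMonoid.of 0 * FreeMonoid.of 1) 1 :=
    ConGen.Rel.of _ _ ⟨rfl, rfl⟩
  exact (Con.eq _).mpr h

lemma q_nf (w : FreeMonoid (Fin 2)) :
    ∃ m n : ℕ, q w = q (FreeMonoid.of 1 ^ m * FreeMonoid.of 0 ^ n) := by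
  induction w using FreeMonoid.inductionOn' with
  | one => exact ⟨0, 0, by simp⟩
  | of_mul a w ih =>
    obtain ⟨m, n, h⟩ := ih
    rcases (by omega : a = 0 ∨ a = 1) with rfl | rfl
    · cases m with
      | zero =>
        refine ⟨0, n + 1, ?_⟩
        rw [map_mul, h, ← map_mul]
        congr 1
        simp [pow_succ']
      | succ m' =>
        refine ⟨m', n, ?_⟩
        rw [map_mul, h]
        have h2 : (FreeMonoid.of 1 : FreeMonoid (Fin 2)) ^ (m' + 1) * FreeMonoid.of 0 ^ n =
            FreeMonoid.of 1 * (FreeMonoid.of 1 ^ m' * FreeMonoid.of 0 ^ n) := by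
          rw [pow_succ', mul_assoc]
        rw [h2, map_mul, ← mul_assoc, q_rel, one_mul]
    · refine ⟨m + 1, n, ?_⟩
      rw [map_mul, h, ← map_mul]
      congr 1
      rw [← mul_assoc, ← pow_succ']

end BicyclicSide

/-- If `x·y = 1` and `y·x ≠ 1` in a monoid `M`, then the submonoid of `M`
generated by `{x, y}` is isomorphic to the bicyclic monoid. -/
theorem stmt0 (M : Type*) [Monoid M] (x y : M) (hxy : x * y = 1) (hyx : y * x ≠ 1) :
    Nonempty (Submonoid.closure {x, y} ≃* Bicyclic) := by
  set F : Fin 2 → M := ![x, y] with hF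
  have hker : conGen BicyclicRel ≤ Con.ker (FreeMonoid.lift F) := by
    apply Con.conGen_le.mpr
    rintro a b ⟨rfl, rfl⟩
    rw [Con.ker_rel]
    simp [hF, hxy]
  set φ : Bicyclic →* M := Con.lift _ (FreeMonoid.lift F) hker with hφ
  have hφq : ∀ w, φ (q w) = FreeMonoid.lift F w := fun w => Con.lift_mk' hker w
  have hφnf : ∀ m n : ℕ, φ (q (FreeMonoid.of 1 ^ m * FreeMonoid.of 0 ^ n)) = y ^ m * x ^ n := by
    intro m n
    rw [hφq, map_mul, map_pow, map_pow]
    simp [hF]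
  have hφx : φ (q (FreeMonoid.of 0)) = x := by rw [hφq]; simp [hF]
  have hφy : φ (q (FreeMonoid.of 1)) = y := by rw [hφq]; simp [hF]
  set S := Submonoid.closure ({x, y} : Set M) with hS
  have hmem : ∀ a : Bicyclic, φ a ∈ S := by
    intro a
    obtain ⟨w, rfl⟩ := q_surjective a
    obtain ⟨m, n, hw⟩ := q_nf w
    rw [hw, hφnf]
    exact mul_mem (pow_mem (Submonoid.subset_closure (by simp)) m)
      (pow_mem (Submonoid.subset_closure (by simp)) n)
  have hinj : Function.Injective φ := by
    intro a b hab
    obtain ⟨wa, rfl⟩ := q_surjective a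
    obtain ⟨wb, rfl⟩ := q_surjective b
    obtain ⟨m, n, hwa⟩ := q_nf wa
    obtain ⟨p, r, hwb⟩ := q_nf wb
    rw [hwa, hwb] at hab ⊢
    rw [hφnf, hφnf] at hab
    obtain ⟨h1, h2⟩ := uniq hxy hyx hab
    rw [h1, h2]
  set e : Bicyclic →* S := φ.codRestrict S hmem with he
  have heinj : Function.Injective e := by
    intro a b hab
    apply hinj
    exact congrArg Subtype.val hab
  have hesurj : Function.Surjective e := by
    rintro ⟨s, hs⟩
    have : s ∈ MonoidHom.mrange φ := by
      refine Submonoid.closure_le.mpr ?_ hs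
      rintro z (rfl | rfl)
      · exact ⟨q (FreeMonoid.of 0), hφx⟩
      · exact ⟨q (FreeMonoid.of 1), hφy⟩
    obtain ⟨a, ha⟩ := this
    exact ⟨a, Subtype.ext ha⟩
  exact ⟨(MulEquiv.ofBijective e ⟨heinj, hesurj⟩).symm⟩

end Paper
end

section
/- For every monoid M, exactly one of the following holds: (1) the set J(M) = {a ∈ M : ∃ b, c ∈ M, b·a·c = 1} is a subgroup of M, i.e. it is a submonoid of M in which every element has a two-sided inverse lying in J(M); (2) M contains a submonoid isomorphic to the bicyclic monoid B. Moreover, (2) holds if and only if there exist x, y ∈ M with x·y = 1 and y·x ≠ 1. -/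
namespace Paper

/-- `J(M) = {a ∈ M : ∃ b c, b·a·c = 1}`. -/
def Jset (M : Type*) [Monoid M] : Set M := {a | ∃ b c : M, b * a * c = 1}

/-! ### Auxiliary lemmas on monoids with a one-sided unit pair -/

section Mside

variable {M : Type*} [Monoid M] {x y : M}

private lemma powinv (hxy : x * y = 1) : ∀ k : ℕ, x ^ k * y ^ k = 1 := by
  intro k
  induction k with
  | zero => simp
  | succ k ih =>
    rw [pow_succ, pow_succ', mul_assoc, ← mul_assoc x y, hxy, one_mul, ih]

private lemma absorb1 (hxy : x * y = 1) (a b : ℕ) : x ^ a * y ^ (a + b) = y ^ b := by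
  rw [pow_add, ← mul_assoc, powinv hxy, one_mul]

private lemma absorb2 (hxy : x * y = 1) (a b : ℕ) : x ^ (a + b) * y ^ b = x ^ a := by
  rw [pow_add, mul_assoc, powinv hxy, mul_one]

private lemma nounit (hxy : x * y = 1) (hne : y * x ≠ 1) :
    ∀ a b : ℕ, y ^ a * x ^ b = 1 → a = 0 ∧ b = 0 := by
  intro a b h
  constructor
  · by_contra ha
    obtain ⟨a', rfl⟩ := Nat.exists_eq_succ_of_ne_zero ha
    have hr : y * (y ^ a' * x ^ b) = 1 := by
      rw [← mul_assoc, ← pow_succ']; exact h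
    have hx : x = y ^ a' * x ^ b := by
      calc x = x * (y * (y ^ a' * x ^ b)) := by rw [hr, mul_one]
        _ = (x * y) * (y ^ a' * x ^ b) := by rw [mul_assoc]
        _ = y ^ a' * x ^ b := by rw [hxy, one_mul]
    exact hne (by rw [hx]; exact hr)
  · by_contra hb
    obtain ⟨b', rfl⟩ := Nat.exists_eq_succ_of_ne_zero hb
    have hl : (y ^ a * x ^ b') * x = 1 := by rw [mul_assoc, ← pow_succ]; exact h
    have hy : y = y ^ a * x ^ b' := by
      calc y = ((y ^ a * x ^ b') * x) * y := by rw [hl, one_mul]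
        _ = (y ^ a * x ^ b') * (x * y) := by rw [mul_assoc]
        _ = y ^ a * x ^ b' := by rw [hxy, mul_one]
    exact hne (by rw [hy]; exact hl)

private lemma inj_aux (hxy : x * y = 1) (hne : y * x ≠ 1) {m n m' n' : ℕ} (hle : m ≤ m')
    (h : y ^ m * x ^ n = y ^ m' * x ^ n') : m = m' ∧ n = n' := by
  obtain ⟨d, rfl⟩ := Nat.exists_eq_add_of_le hle
  have h1 : x ^ n = y ^ d * x ^ n' := by
    have h2 : x ^ m * (y ^ m * x ^ n) = x ^ m * (y ^ (m + d) * x ^ n') := by rw [h]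
    rwa [← mul_assoc, powinv hxy, one_mul, ← mul_assoc, absorb1 hxy] at h2
  rcases le_total n' n with hn | hn
  · obtain ⟨e, rfl⟩ := Nat.exists_eq_add_of_le hn
    have h3 : x ^ (n' + e) * y ^ n' = (y ^ d * x ^ n') * y ^ n' := by rw [h1]
    rw [add_comm n' e, absorb2 hxy e n', mul_assoc, powinv hxy, mul_one] at h3
    -- h3 : x ^ e = y ^ d
    have h4 : y ^ (d + e) * x ^ (0 : ℕ) = 1 := by
      rw [pow_zero, mul_one, pow_add, ← h3]
      exact powinv hxy e
    obtain ⟨hde, -⟩ := nounit hxy hne _ _ h4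
    obtain ⟨hd, he⟩ := Nat.add_eq_zero.mp hde
    subst hd; subst he; simp
  · obtain ⟨e, rfl⟩ := Nat.exists_eq_add_of_le hn
    have h3 : x ^ n * y ^ n = (y ^ d * x ^ (n + e)) * y ^ n := by rw [h1]
    rw [powinv hxy, mul_assoc, add_comm n e, absorb2 hxy e n] at h3
    -- h3 : 1 = y ^ d * x ^ e
    obtain ⟨hd, he⟩ := nounit hxy hne d e h3.symm
    subst hd; subst he; simp

/-- The canonical monoid homomorphism from the bicyclic monoid determined by a pair
`x, y` with `x * y = 1`. -/
private def bicyclicHom (x y : M) (hxy : x * y = 1) : Bicyclic →* M :=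
  Con.lift _ (FreeMonoid.lift ![x, y]) (Con.conGen_le.mpr (by
    rintro a b ⟨rfl, rfl⟩
    simp only [Con.ker_rel, map_mul, map_one, FreeMonoid.lift_eval_of,
      Matrix.cons_val_zero, Matrix.cons_val_one, Matrix.head_cons, hxy]))

end Mside

/-! ### The generators of the bicyclic monoid -/

private def ba : Bicyclic := (conGen BicyclicRel).mk' (FreeMonoid.of 0)
private def bb : Bicyclic := (conGen BicyclicRel).mk' (FreeMonoid.of 1)

private lemma ba_mul_bb : ba * bb = 1 := by
  rw [show ba * bb = (conGen BicyclicRel).mk' (FreeMonoid.of 0 * FreeMonoid.of 1) from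
      (map_mul _ _ _).symm,
    show (1 : Bicyclic) = (conGen BicyclicRel).mk' 1 from (map_one _).symm]
  exact (Con.eq _).mpr (ConGen.Rel.of _ _ ⟨rfl, rfl⟩)

private lemma bicyclicHom_ba {M : Type*} [Monoid M] {x y : M} (hxy : x * y = 1) :
    bicyclicHom x y hxy ba = x := by
  show Con.lift _ _ _ ((conGen BicyclicRel).mk' (FreeMonoid.of 0)) = x
  rw [Con.lift_mk']
  simp [FreeMonoid.lift_eval_of]

private lemma bicyclicHom_bb {M : Type*} [Monoid M] {x y : M} (hxy : x * y = 1) :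
    bicyclicHom x y hxy bb = y := by
  show Con.lift _ _ _ ((conGen BicyclicRel).mk' (FreeMonoid.of 1)) = y
  rw [Con.lift_mk']
  simp [FreeMonoid.lift_eval_of]

private def fpred : Function.End ℕ := Nat.pred
private def fsucc : Function.End ℕ := Nat.succ

private lemma bb_mul_ba_ne : bb * ba ≠ (1 : Bicyclic) := by
  intro h
  have hxy : fpred * fsucc = 1 := by funext n; exact Nat.pred_succ n
  have h1 := congrArg (bicyclicHom fpred fsucc hxy) h
  rw [map_mul, map_one, bicyclicHom_ba, bicyclicHom_bb] at h1
  have h0 := congrFun h1 0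
  exact absurd h0 (by decide)

private lemma step0a (n : ℕ) : ba * (bb ^ 0 * ba ^ n) = bb ^ 0 * ba ^ (n + 1) := by
  simp only [pow_zero, one_mul, pow_succ']

private lemma step0b (k n : ℕ) : ba * (bb ^ (k + 1) * ba ^ n) = bb ^ k * ba ^ n := by
  simp only [pow_succ', ← mul_assoc, ba_mul_bb, one_mul]

private lemma step1 (m n : ℕ) : bb * (bb ^ m * ba ^ n) = bb ^ (m + 1) * ba ^ n := by
  simp only [pow_succ', mul_assoc]

/-- Every element of the bicyclic monoid has the normal form `x̄^m x^n`. -/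
private lemma bicyclic_normal' (w : FreeMonoid (Fin 2)) :
    ∃ m n : ℕ, bb ^ m * ba ^ n = ((conGen BicyclicRel).mk' w : Bicyclic) := by
  induction w using FreeMonoid.recOn with
  | one => exact ⟨0, 0, by rw [pow_zero, pow_zero, one_mul, map_one]; rfl⟩
  | of_mul a w ihw =>
    obtain ⟨m, n, hmn⟩ := ihw
    have hsplit : ((conGen BicyclicRel).mk' (FreeMonoid.of a * w) : Bicyclic)
        = ((conGen BicyclicRel).mk' (FreeMonoid.of a) : Bicyclic) *
          ((conGen BicyclicRel).mk' w : Bicyclic) := map_mul _ _ _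
    rw [hsplit, ← hmn]
    fin_cases a
    · rcases m with - | k
      · exact ⟨0, n + 1, (step0a n).symm⟩
      · exact ⟨k, n, (step0b k n).symm⟩
    · exact ⟨m + 1, n, (step1 m n).symm⟩

private lemma bicyclic_normal (u : Bicyclic) : ∃ m n : ℕ, bb ^ m * ba ^ n = u := by
  induction u using Con.induction_on with
  | H w => exact bicyclic_normal' w

private lemma bicyclicHom_injective {M : Type*} [Monoid M] {x y : M} (hxy : x * y = 1)
    (hne : y * x ≠ 1) : Function.Injective (bicyclicHom x y hxy) := by
  intro u v h
  obtain ⟨m, n, rfl⟩ := bicyclic_normal u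
  obtain ⟨m', n', rfl⟩ := bicyclic_normal v
  rw [map_mul, map_pow, map_pow, map_mul, map_pow, map_pow, bicyclicHom_ba hxy,
    bicyclicHom_bb hxy] at h
  rcases le_total m m' with hle | hle
  · obtain ⟨rfl, rfl⟩ := inj_aux hxy hne hle h
    rfl
  · obtain ⟨rfl, rfl⟩ := inj_aux hxy hne hle h.symm
    rfl

/-- For every monoid `M`, exactly one of the following holds:
(1) `J(M)` is a subgroup of `M` (a submonoid in which every element has a two-sided
inverse lying in `J(M)`); (2) `M` contains a submonoid isomorphic to the bicyclic
monoid. Moreover, (2) holds iff there are `x, y ∈ M` with `x·y = 1` and `y·x ≠ 1`. -/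
theorem stmt1 (M : Type*) [Monoid M] :
    Xor'
      ((∃ N : Submonoid M, (N : Set M) = Jset M) ∧
        ∀ a ∈ Jset M, ∃ b ∈ Jset M, a * b = 1 ∧ b * a = 1)
      (∃ N : Submonoid M, Nonempty (N ≃* Bicyclic)) ∧
    ((∃ N : Submonoid M, Nonempty (N ≃* Bicyclic)) ↔
      ∃ x y : M, x * y = 1 ∧ y * x ≠ 1) := by
  -- (2) ↔ (∃ x y, x*y = 1 ∧ y*x ≠ 1)
  have hBC : (∃ N : Submonoid M, Nonempty (N ≃* Bicyclic)) ↔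
      ∃ x y : M, x * y = 1 ∧ y * x ≠ 1 := by
    constructor
    · rintro ⟨N, ⟨e⟩⟩
      refine ⟨(e.symm ba : N), (e.symm bb : N), ?_, ?_⟩
      · have : e.symm ba * e.symm bb = 1 := by
          rw [← map_mul, ba_mul_bb, map_one]
        exact_mod_cast congrArg (Subtype.val) this
      · intro hcon
        have h1 : e.symm (bb * ba) = 1 := by
          apply Subtype.val_injective
          rw [map_mul]
          exact_mod_cast hcon
        have h2 : bb * ba = 1 := by
          have := congrArg e h1
          rwa [MulEquiv.apply_symm_apply, map_one] at this
        exact bb_mul_ba_ne h2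
    · rintro ⟨x, y, hxy, hne⟩
      refine ⟨MonoidHom.mrange (bicyclicHom x y hxy), ⟨?_⟩⟩
      exact (MulEquiv.ofBijective (bicyclicHom x y hxy).mrangeRestrict
        ⟨fun u v h => bicyclicHom_injective hxy hne (congrArg Subtype.val h),
          (bicyclicHom x y hxy).mrangeRestrict_surjective⟩).symm
  refine ⟨?_, hBC⟩
  by_cases hC : ∃ x y : M, x * y = 1 ∧ y * x ≠ 1
  · refine Or.inr ⟨hBC.mpr hC, ?_⟩
    rintro ⟨-, hinv⟩
    obtain ⟨x, y, hxy, hne⟩ := hC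
    have hyJ : y ∈ Jset M := ⟨x, 1, by rw [mul_one]; exact hxy⟩
    obtain ⟨b, -, hyb, hby⟩ := hinv y hyJ
    have hx : x = b := by
      calc x = x * (y * b) := by rw [hyb, mul_one]
        _ = (x * y) * b := by rw [mul_assoc]
        _ = b := by rw [hxy, one_mul]
    exact hne (by rw [hx]; exact hyb)
  · push_neg at hC
    refine Or.inl ⟨⟨⟨IsUnit.submonoid M, ?_⟩, ?_⟩, fun hB => ?_⟩
    · ext a
      simp only [IsUnit.mem_submonoid_iff, Jset, Set.mem_setOf_eq]
      constructor
      · rintro ⟨u, rfl⟩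
        exact ⟨(u⁻¹ : Mˣ), 1, by simp⟩
      · rintro ⟨b, c, h⟩
        have h1 : (b * a) * c = 1 := h
        have h2 : c * (b * a) = 1 := hC (b * a) c h1
        have h3 : (a * c) * b = 1 := hC b (a * c) (by rw [← mul_assoc]; exact h)
        exact ⟨⟨a, c * b, by rw [← mul_assoc]; exact h3, by rw [mul_assoc]; exact h2⟩, rfl⟩
    · rintro a ⟨b, c, h⟩
      have h1 : (b * a) * c = 1 := h
      have h2 : c * (b * a) = 1 := hC (b * a) c h1
      have h3 : (a * c) * b = 1 := hC b (a * c) (by rw [← mul_assoc]; exact h)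
      refine ⟨c * b, ⟨a, 1, ?_⟩, ?_, ?_⟩
      · rw [mul_one, ← mul_assoc]; exact h3
      · rw [← mul_assoc]; exact h3
      · rw [mul_assoc]; exact h2
    · obtain ⟨x, y, hxy, hne⟩ := hBC.mp hB
      exact hne (hC x y hxy)
end Paper
end

section
/- For every monoid M, exactly one of the following holds: (1) M is an FRI-monoid; (2) there exist a finitely generated submonoid N ⊆ M and infinite subsets S ⊆ R(N) and S' ⊆ L(N) such that no two distinct elements of S have a right inverse in N in common, and no two distinct elements of S' have a left inverse in N in common. -/
namespace Paper

/-- `M` is an FRI-monoid: every finitely generated submonoid `N` of `M` has only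
finitely many right-invertible elements. -/
def IsFRI (M : Type*) [Monoid M] : Prop :=
  ∀ N : Submonoid M, N.FG → {a : N | ∃ b : N, a * b = 1}.Finite

section Aux
variable {K : Type*} [Monoid K] {a b : K}

lemma pow_mul_pow (hab : a * b = 1) : ∀ n : ℕ, a ^ n * b ^ n = 1 := by
  intro n
  induction n with
  | zero => simp
  | succ k ih =>
    rw [pow_succ' a, pow_succ b, mul_assoc, ← mul_assoc (a ^ k), ih, one_mul, hab]

lemma apow_ne_one (hab : a * b = 1) (hba : b * a ≠ 1) (n : ℕ) : a ^ (n + 1) ≠ 1 := by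
  intro h
  apply hba
  have hb : b = a ^ n := by
    calc b = (a ^ n * a) * b := by rw [← pow_succ, h, one_mul]
    _ = a ^ n * (a * b) := mul_assoc _ _ _
    _ = a ^ n := by rw [hab, mul_one]
  rw [hb, ← pow_succ, h]

lemma bpow_ne_one (hab : a * b = 1) (hba : b * a ≠ 1) (n : ℕ) : b ^ (n + 1) ≠ 1 := by
  intro h
  apply hba
  have ha : a = b ^ n := by
    calc a = a * (b * b ^ n) := by rw [← pow_succ', h, mul_one]
    _ = (a * b) * b ^ n := (mul_assoc _ _ _).symm
    _ = b ^ n := by rw [hab, one_mul]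
  rw [ha, ← pow_succ', h]

lemma a_shared (hab : a * b = 1) (hba : b * a ≠ 1) {m n : ℕ} (hmn : m < n) (c : K)
    (h1 : a ^ (m + 1) * c = 1) (h2 : a ^ (n + 1) * c = 1) : False := by
  have key : a ^ (n - m) = 1 := by
    calc a ^ (n - m) = a ^ (n - m) * (a ^ (m + 1) * c) := by rw [h1, mul_one]
    _ = a ^ (n - m) * a ^ (m + 1) * c := (mul_assoc _ _ _).symm
    _ = a ^ (n + 1) * c := by rw [← pow_add]; congr 2; omega
    _ = 1 := h2
  apply apow_ne_one hab hba (n - m - 1)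
  rwa [show n - m - 1 + 1 = n - m by omega]

lemma b_shared (hab : a * b = 1) (hba : b * a ≠ 1) {m n : ℕ} (hmn : m < n) (c : K)
    (h1 : c * b ^ (m + 1) = 1) (h2 : c * b ^ (n + 1) = 1) : False := by
  have key : b ^ (n - m) = 1 := by
    calc b ^ (n - m) = (c * b ^ (m + 1)) * b ^ (n - m) := by rw [h1, one_mul]
    _ = c * (b ^ (m + 1) * b ^ (n - m)) := mul_assoc _ _ _
    _ = c * b ^ (n + 1) := by rw [← pow_add]; congr 2; omega
    _ = 1 := h2
  apply bpow_ne_one hab hba (n - m - 1)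
  rwa [show n - m - 1 + 1 = n - m by omega]

lemma apow_inj (hab : a * b = 1) (hba : b * a ≠ 1) :
    Function.Injective (fun n : ℕ => a ^ (n + 1)) := by
  intro m n h
  simp only at h
  by_contra hne
  rcases Nat.lt_or_ge m n with hmn | hge
  · exact a_shared hab hba hmn (b ^ (m + 1)) (pow_mul_pow hab (m + 1))
      (by rw [← h]; exact pow_mul_pow hab (m + 1))
  · have hnm : n < m := by omega
    exact a_shared hab hba hnm (b ^ (n + 1)) (pow_mul_pow hab (n + 1))
      (by rw [h]; exact pow_mul_pow hab (n + 1))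

lemma bpow_inj (hab : a * b = 1) (hba : b * a ≠ 1) :
    Function.Injective (fun n : ℕ => b ^ (n + 1)) := by
  intro m n h
  simp only at h
  by_contra hne
  rcases Nat.lt_or_ge m n with hmn | hge
  · exact b_shared hab hba hmn (a ^ (m + 1)) (pow_mul_pow hab (m + 1))
      (by rw [← h]; exact pow_mul_pow hab (m + 1))
  · have hnm : n < m := by omega
    exact b_shared hab hba hnm (a ^ (n + 1)) (pow_mul_pow hab (n + 1))
      (by rw [h]; exact pow_mul_pow hab (n + 1))

end Aux

/-- For every monoid `M`, exactly one of the following holds: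
(1) `M` is an FRI-monoid; (2) there are a finitely generated submonoid `N ⊆ M` and
infinite subsets `S ⊆ R(N)`, `S' ⊆ L(N)` such that no two distinct elements of `S`
share a right inverse in `N` and no two distinct elements of `S'` share a left
inverse in `N`. -/
theorem stmt2 (M : Type*) [Monoid M] :
    Xor' (IsFRI M)
      (∃ N : Submonoid M, N.FG ∧
        ∃ S S' : Set N,
          S.Infinite ∧ S ⊆ {a : N | ∃ b : N, a * b = 1} ∧
          (∀ a ∈ S, ∀ a' ∈ S, a ≠ a' → ¬∃ b : N, a * b = 1 ∧ a' * b = 1) ∧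
          S'.Infinite ∧ S' ⊆ {a : N | ∃ b : N, b * a = 1} ∧
          (∀ a ∈ S', ∀ a' ∈ S', a ≠ a' → ¬∃ b : N, b * a = 1 ∧ b * a' = 1)) := by
  by_cases hF : IsFRI M
  · left
    refine ⟨hF, ?_⟩
    rintro ⟨N, hFG, S, S', hSinf, hSsub, -⟩
    exact hSinf ((hF N hFG).subset hSsub)
  · right
    refine ⟨?_, hF⟩
    by_cases h2 : ∃ a b : M, a * b = 1 ∧ b * a ≠ 1
    · obtain ⟨a, b, hab, hba⟩ := h2
      set N : Submonoid M := Submonoid.closure {a, b} with hN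
      have ha : a ∈ N := Submonoid.subset_closure (by simp)
      have hb : b ∈ N := Submonoid.subset_closure (by simp)
      set α : N := ⟨a, ha⟩
      set β : N := ⟨b, hb⟩
      have hab' : α * β = 1 := Subtype.ext hab
      have hba' : β * α ≠ 1 := fun h => hba (congrArg Subtype.val h)
      refine ⟨N, (Submonoid.fg_iff _).2 ⟨{a, b}, hN.symm, Set.toFinite _⟩,
        Set.range (fun n : ℕ => α ^ (n + 1)), Set.range (fun n : ℕ => β ^ (n + 1)),
        Set.infinite_range_of_injective (apow_inj hab' hba'), ?_, ?_,
        Set.infinite_range_of_injective (bpow_inj hab' hba'), ?_, ?_⟩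
      · rintro _ ⟨n, rfl⟩
        exact ⟨β ^ (n + 1), pow_mul_pow hab' (n + 1)⟩
      · rintro _ ⟨m, rfl⟩ _ ⟨n, rfl⟩ hne ⟨c, hc1, hc2⟩
        rcases Nat.lt_or_ge m n with hmn | hge
        · exact a_shared hab' hba' hmn c hc1 hc2
        · have hnm : n < m := by
            rcases Nat.eq_or_lt_of_le hge with h | h
            · exact absurd (by rw [h]) hne
            · omega
          exact a_shared hab' hba' hnm c hc2 hc1
      · rintro _ ⟨n, rfl⟩
        exact ⟨α ^ (n + 1), pow_mul_pow hab' (n + 1)⟩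
      · rintro _ ⟨m, rfl⟩ _ ⟨n, rfl⟩ hne ⟨c, hc1, hc2⟩
        rcases Nat.lt_or_ge m n with hmn | hge
        · exact b_shared hab' hba' hmn c hc1 hc2
        · have hnm : n < m := by
            rcases Nat.eq_or_lt_of_le hge with h | h
            · exact absurd (by rw [h]) hne
            · omega
          exact b_shared hab' hba' hnm c hc2 hc1
    · push_neg at h2
      simp only [IsFRI, not_forall] at hF
      obtain ⟨N, hFG, hInf⟩ := hF
      have h2' : ∀ x y : N, x * y = 1 → y * x = 1 := fun x y h =>
        Subtype.ext (h2 x y (congrArg Subtype.val h))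
      refine ⟨N, hFG, {a : N | ∃ b : N, a * b = 1}, {a : N | ∃ b : N, a * b = 1},
        hInf, subset_rfl, ?_, hInf, ?_, ?_⟩
      · rintro x ⟨y, hy⟩ x' ⟨y', hy'⟩ hne ⟨c, hc1, hc2⟩
        apply hne
        have hcx : c * x = 1 := h2' x c hc1
        calc x = (x' * c) * x := by rw [hc2, one_mul]
        _ = x' * (c * x) := mul_assoc _ _ _
        _ = x' := by rw [hcx, mul_one]
      · rintro x ⟨y, hy⟩
        exact ⟨y, h2' x y hy⟩
      · rintro x ⟨y, hy⟩ x' ⟨y', hy'⟩ hne ⟨c, hc1, hc2⟩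
        apply hne
        have hxc : x * c = 1 := h2' c x hc1
        calc x = x * (c * x') := by rw [hc2, mul_one]
        _ = (x * c) * x' := (mul_assoc _ _ _).symm
        _ = x' := by rw [hxc, one_mul]

end Paper
end

section
/- Let N be a monoid whose set R(N) = {a ∈ N : ∃ b ∈ N, ab = 1} of right-invertible elements is finite. Then J(N) = {a ∈ N : ∃ b, c ∈ N, b·a·c = 1} is a finite subgroup of N, i.e. a finite submonoid in which every element has a two-sided inverse lying in J(N). -/
namespace Paper

private lemma pow_mul_pow_eq_one {N : Type*} [Monoid N] {a b : N} (hab : a * b = 1) :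
    ∀ n : ℕ, a ^ n * b ^ n = 1 := by
  intro n
  induction n with
  | zero => simp
  | succ n ih =>
    rw [pow_succ, pow_succ', mul_assoc, ← mul_assoc a, hab, one_mul, ih]

private lemma key_s3 {N : Type*} [Monoid N] (h : {a : N | ∃ b : N, a * b = 1}.Finite)
    {a b : N} (hab : a * b = 1) : IsUnit a := by
  have hmem : ∀ n : ℕ, a ^ n ∈ {a : N | ∃ b : N, a * b = 1} := fun n =>
    ⟨b ^ n, pow_mul_pow_eq_one hab n⟩
  obtain ⟨i, -, j, -, hij, heq⟩ :=
    Set.infinite_univ.exists_ne_map_eq_of_mapsTo (fun n _ => hmem n) h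
  wlog hlt : i < j generalizing i j
  · exact this j i hij.symm heq.symm (by omega)
  have hk : a ^ (j - i) = 1 := by
    have : a ^ (j - i) * (a ^ i * b ^ i) = 1 := by
      rw [← mul_assoc, ← pow_add, Nat.sub_add_cancel hlt.le, ← heq,
        pow_mul_pow_eq_one hab]
    rwa [pow_mul_pow_eq_one hab, mul_one] at this
  have hk1 : 1 ≤ j - i := by omega
  refine ⟨⟨a, a ^ (j - i - 1), ?_, ?_⟩, rfl⟩
  · rw [← pow_succ', Nat.sub_add_cancel hk1]; exact hk
  · rw [← pow_succ, Nat.sub_add_cancel hk1]; exact hk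

private lemma jset_eq_units {N : Type*} [Monoid N]
    (h : {a : N | ∃ b : N, a * b = 1}.Finite) : Jset N = {a : N | IsUnit a} := by
  ext a
  constructor
  · rintro ⟨b, c, hbc⟩
    have hb : IsUnit b := key_s3 h (b := a * c) (by rw [← mul_assoc]; exact hbc)
    have hba : IsUnit (b * a) := key_s3 h hbc
    have : a = ↑hb.unit⁻¹ * (b * a) := by
      rw [← mul_assoc, IsUnit.val_inv_mul, one_mul]
    rw [this]
    exact (hb.unit⁻¹.isUnit).mul hba
  · rintro ⟨u, rfl⟩
    exact ⟨↑u⁻¹, 1, by simp⟩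

/-- If a monoid `N` has finitely many right-invertible elements, then
`J(N)` is a finite subgroup of `N`: it is finite, it is the carrier of a submonoid of `N`,
and each of its elements has a two-sided inverse lying in `J(N)`. -/
theorem stmt3 (N : Type*) [Monoid N] (h : {a : N | ∃ b : N, a * b = 1}.Finite) :
    (Jset N).Finite ∧ (∃ P : Submonoid N, (P : Set N) = Jset N) ∧
      ∀ a ∈ Jset N, ∃ b ∈ Jset N, a * b = 1 ∧ b * a = 1 := by
  have hJ := jset_eq_units h
  refine ⟨h.subset ?_, ⟨IsUnit.submonoid N, ?_⟩, ?_⟩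
  · intro a ha
    rw [hJ] at ha
    obtain ⟨u, rfl⟩ := ha
    exact ⟨↑u⁻¹, by simp⟩
  · rw [hJ]; rfl
  · intro a ha
    rw [hJ] at ha
    obtain ⟨u, rfl⟩ := ha
    exact ⟨↑u⁻¹, by rw [hJ]; exact u⁻¹.isUnit, by simp, by simp⟩

end Paper
end

section
/- For every monoid M and every finite group F, the classes of valence-automaton languages coincide: for every finite alphabet X, a language L ⊆ X* lies in VA(M × F) if and only if it lies in VA(M). -/
namespace Paper

def interDFA {α σ₁ σ₂ : Type*} (D₁ : DFA α σ₁) (D₂ : DFA α σ₂) : DFA α (σ₁ × σ₂) where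
  step := fun p a => (D₁.step p.1 a, D₂.step p.2 a)
  start := (D₁.start, D₂.start)
  accept := {p | p.1 ∈ D₁.accept ∧ p.2 ∈ D₂.accept}

lemma interDFA_evalFrom {α σ₁ σ₂ : Type*} (D₁ : DFA α σ₁) (D₂ : DFA α σ₂)
    (s₁ : σ₁) (s₂ : σ₂) (l : List α) :
    (interDFA D₁ D₂).evalFrom (s₁, s₂) l = (D₁.evalFrom s₁ l, D₂.evalFrom s₂ l) := by
  induction l generalizing s₁ s₂ with
  | nil => rfl
  | cons a l ih =>
    simp only [DFA.evalFrom, List.foldl_cons] at *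
    exact ih _ _

lemma IsRegular.inter {α : Type*} {L₁ L₂ : Language α}
    (h₁ : L₁.IsRegular) (h₂ : L₂.IsRegular) : (L₁ ⊓ L₂).IsRegular := by
  obtain ⟨σ₁, f₁, D₁, rfl⟩ := h₁
  obtain ⟨σ₂, f₂, D₂, rfl⟩ := h₂
  refine ⟨σ₁ × σ₂, inferInstance, interDFA D₁ D₂, ?_⟩
  ext l
  have : l ∈ D₁.accepts ⊓ D₂.accepts ↔ l ∈ D₁.accepts ∧ l ∈ D₂.accepts := Iff.rfl
  rw [this, DFA.mem_accepts, DFA.mem_accepts, DFA.mem_accepts, DFA.eval, DFA.eval, DFA.eval,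
    show (interDFA D₁ D₂).start = (D₁.start, D₂.start) from rfl, interDFA_evalFrom]
  exact Iff.rfl

lemma kernel_regular {Y : Type*} {N : Type*} [Monoid N] [Fintype N] (ψ : FreeMonoid Y →* N) :
    Language.IsRegular {l : List Y | ψ (FreeMonoid.ofList l) = 1} := by
  refine ⟨Fin (Fintype.card N), inferInstance,
    DFA.reindex (Fintype.equivFin N) ⟨fun q a => q * ψ (FreeMonoid.of a), 1, {1}⟩, ?_⟩
  rw [DFA.accepts_reindex]
  have key : ∀ (l : List Y) (s : N),
      DFA.evalFrom ⟨fun q a => q * ψ (FreeMonoid.of a), 1, {1}⟩ s l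
        = s * ψ (FreeMonoid.ofList l) := by
    intro l
    induction l with
    | nil => intro s; simp [DFA.evalFrom]
    | cons a l ih =>
      intro s
      simp only [DFA.evalFrom, List.foldl_cons] at *
      rw [ih]
      have : FreeMonoid.ofList (a :: l) = FreeMonoid.of a * FreeMonoid.ofList l := rfl
      rw [this, map_mul, mul_assoc]
  ext l
  rw [DFA.mem_accepts, DFA.eval, key]
  simp only [one_mul]
  exact Iff.rfl

def VA (M : Type*) [Monoid M] {X : Type} (L : Language X) : Prop :=
  ∃ (Y : Type) (_ : Fintype Y) (R : Language Y)
    (φ : FreeMonoid Y →* M) (h : FreeMonoid Y →* FreeMonoid X),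
    R.IsRegular ∧
      L = (fun w => FreeMonoid.toList (h w)) ''
            {w : FreeMonoid Y | FreeMonoid.toList w ∈ R ∧ φ w = 1}

/-- For every monoid `M` and finite group `F`, the classes of valence
automaton languages over `M × F` and over `M` coincide. -/
theorem stmt4 (M : Type*) [Monoid M] (F : Type*) [Group F] [Fintype F]
    (X : Type) [Fintype X] (L : Language X) :
    VA (M × F) L ↔ VA M L := by
  constructor
  · rintro ⟨Y, fY, R, φ, h, hreg, hL⟩
    refine ⟨Y, fY, R ⊓ {l : List Y | (MonoidHom.snd M F).comp φ (FreeMonoid.ofList l) = 1},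
      (MonoidHom.fst M F).comp φ, h, IsRegular.inter hreg (kernel_regular _), ?_⟩
    rw [hL]
    have hset : {w : FreeMonoid Y |
        FreeMonoid.toList w ∈ R ⊓ {l : List Y | (MonoidHom.snd M F).comp φ (FreeMonoid.ofList l) = 1}
          ∧ ((MonoidHom.fst M F).comp φ) w = 1}
        = {w : FreeMonoid Y | FreeMonoid.toList w ∈ R ∧ φ w = 1} := by
      ext w
      have hw : FreeMonoid.ofList (FreeMonoid.toList w) = w := rfl
      simp only [Set.mem_setOf_eq, MonoidHom.comp_apply, MonoidHom.coe_fst,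
        MonoidHom.coe_snd, hw]
      constructor
      · rintro ⟨⟨h1, h2⟩, h3⟩
        exact ⟨h1, Prod.ext h3 h2⟩
      · rintro ⟨h1, h2⟩
        exact ⟨⟨h1, congrArg Prod.snd h2⟩, congrArg Prod.fst h2⟩
    rw [hset]
  · rintro ⟨Y, fY, R, φ, h, hreg, hL⟩
    refine ⟨Y, fY, R, (MonoidHom.inl M F).comp φ, h, hreg, ?_⟩
    rw [hL]
    have hset : {w : FreeMonoid Y | FreeMonoid.toList w ∈ R ∧ ((MonoidHom.inl M F).comp φ) w = 1}
        = {w : FreeMonoid Y | FreeMonoid.toList w ∈ R ∧ φ w = 1} := by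
      ext w
      simp only [Set.mem_setOf_eq, MonoidHom.comp_apply, MonoidHom.inl_apply, Prod.mk_eq_one,
        and_true]
    rw [hset]

end Paper
end

section
/- For every monoid M, the following are equivalent: (1) M is an FRI-monoid; (2) for every finite alphabet X, a language L ⊆ X* lies in VA(M) if and only if L is regular. -/
namespace Paper

open FreeMonoid Function

attribute [local instance] Classical.propDecidable




theorem mul_eq_one_comm_of_finite {Q : Type*} [Monoid Q] [Finite Q]
    {x y : Q} (h : x * y = 1) : y * x = 1 := by
  have hinj : Function.Injective (fun z : Q => z * x) := by
    intro z z' hz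
    have h2 := congrArg (· * y) hz
    simpa [mul_assoc, h] using h2
  obtain ⟨z, hz⟩ := (Finite.injective_iff_surjective.mp hinj) 1
  simp only at hz
  have hzy : z = y := by
    have h2 := congrArg (· * y) hz
    simpa [mul_assoc, h] using h2
  rw [← hzy]; exact hz

-- NFA helper lemmas
theorem stepSet_mono {α σ : Type*} (A : NFA α σ) {S T : Set σ} (hST : S ⊆ T) (a : α) :
    A.stepSet S a ⊆ A.stepSet T a := by
  intro s hs
  rw [NFA.mem_stepSet] at hs ⊢
  obtain ⟨t, ht, hst⟩ := hs
  exact ⟨t, hST ht, hst⟩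

theorem evalFrom_mono {α σ : Type*} (A : NFA α σ) {S T : Set σ} (hST : S ⊆ T) (l : List α) :
    A.evalFrom S l ⊆ A.evalFrom T l := by
  induction l generalizing S T with
  | nil => exact hST
  | cons a l ih => exact ih (stepSet_mono A hST a)

theorem evalFrom_app {α σ : Type*} (A : NFA α σ) (S : Set σ) (l l' : List α) :
    A.evalFrom S (l ++ l') = A.evalFrom (A.evalFrom S l) l' := by
  simp [NFA.evalFrom, List.foldl_append]

-- product DFA
def prodDFA {α σ1 σ2 : Type*} (D1 : DFA α σ1) (D2 : DFA α σ2) : DFA α (σ1 × σ2) where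
  step := fun p a => (D1.step p.1 a, D2.step p.2 a)
  start := (D1.start, D2.start)
  accept := {p | p.1 ∈ D1.accept ∧ p.2 ∈ D2.accept}

theorem prodDFA_evalFrom {α σ1 σ2 : Type*} (D1 : DFA α σ1) (D2 : DFA α σ2)
    (p : σ1 × σ2) (l : List α) :
    (prodDFA D1 D2).evalFrom p l = (D1.evalFrom p.1 l, D2.evalFrom p.2 l) := by
  induction l generalizing p with
  | nil => rfl
  | cons a l ih => exact ih _

theorem prodDFA_accepts {α σ1 σ2 : Type*} (D1 : DFA α σ1) (D2 : DFA α σ2) (l : List α) :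
    l ∈ (prodDFA D1 D2).accepts ↔ l ∈ D1.accepts ∧ l ∈ D2.accepts := by
  simp only [DFA.mem_accepts]
  show (prodDFA D1 D2).evalFrom (prodDFA D1 D2).start l ∈ _ ↔ _
  rw [show (prodDFA D1 D2).start = (D1.start, D2.start) from rfl, prodDFA_evalFrom]
  exact Iff.rfl







section Kernel

variable {M : Type*} [Monoid M] {Y : Type} (φ : FreeMonoid Y →* M)

/-- Right-invertible elements of the range of `φ`. -/
def RS : Set ↥(MonoidHom.mrange φ) := {a | ∃ b, a * b = 1}

def oneRS : ↥(RS φ) := ⟨1, 1, one_mul 1⟩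

noncomputable def kstep : Option ↥(RS φ) → Y → Option ↥(RS φ) := fun s y =>
  s.bind fun a =>
    if hq : ((a : ↥(MonoidHom.mrange φ)) * φ.mrangeRestrict (of y)) ∈ RS φ
    then some ⟨_, hq⟩ else none

noncomputable def kDFA : DFA Y (Option ↥(RS φ)) :=
  ⟨kstep φ, some (oneRS φ), {some (oneRS φ)}⟩

lemma kevalFrom_none (l : List Y) : (kDFA φ).evalFrom none l = none := by
  induction l with
  | nil => rfl
  | cons y l ih => exact ih

lemma kfwd : ∀ (l : List Y) (a c : ↥(RS φ)),
    (kDFA φ).evalFrom (some a) l = some c →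
    (c : ↥(MonoidHom.mrange φ)) = (a : ↥(MonoidHom.mrange φ)) * φ.mrangeRestrict (ofList l) := by
  intro l
  induction l with
  | nil =>
    intro a c hc
    have : a = c := by simpa [DFA.evalFrom] using hc
    subst this
    simp [ofList_nil]
  | cons y l ih =>
    intro a c hc
    have hc' : (kDFA φ).evalFrom ((kDFA φ).step (some a) y) l = some c := hc
    by_cases hq : ((a : ↥(MonoidHom.mrange φ)) * φ.mrangeRestrict (of y)) ∈ RS φ
    · have hstep : (kDFA φ).step (some a) y = some ⟨_, hq⟩ := by
        simp [kDFA, kstep, hq]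
      rw [hstep] at hc'
      have := ih _ _ hc'
      rw [this]
      simp [ofList_cons, map_mul, mul_assoc]
    · have hstep : (kDFA φ).step (some a) y = none := by
        simp [kDFA, kstep, hq]
      rw [hstep, kevalFrom_none] at hc'
      exact absurd hc' (by simp)

lemma kbwd : ∀ (l : List Y) (a : ↥(RS φ)),
    ((a : ↥(MonoidHom.mrange φ)) * φ.mrangeRestrict (ofList l)) ∈ RS φ →
    ∃ c, (kDFA φ).evalFrom (some a) l = some c := by
  intro l
  induction l with
  | nil => intro a _; exact ⟨a, rfl⟩
  | cons y l ih =>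
    intro a ha
    obtain ⟨b, hb⟩ := ha
    have hq : ((a : ↥(MonoidHom.mrange φ)) * φ.mrangeRestrict (of y)) ∈ RS φ := by
      refine ⟨φ.mrangeRestrict (ofList l) * b, ?_⟩
      rw [← hb]
      simp [ofList_cons, map_mul, mul_assoc]
    have hstep : (kDFA φ).step (some a) y = some ⟨_, hq⟩ := by
      simp [kDFA, kstep, hq]
    have ha' : (((⟨_, hq⟩ : ↥(RS φ)) : ↥(MonoidHom.mrange φ)) * φ.mrangeRestrict (ofList l)) ∈ RS φ := by
      refine ⟨b, ?_⟩
      rw [← hb]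
      simp [ofList_cons, map_mul, mul_assoc]
    obtain ⟨c, hc⟩ := ih _ ha'
    refine ⟨c, ?_⟩
    show (kDFA φ).evalFrom ((kDFA φ).step (some a) y) l = some c
    rw [hstep]
    exact hc

theorem kDFA_accepts : (kDFA φ).accepts = {l : List Y | φ (ofList l) = 1} := by
  ext l
  rw [DFA.mem_accepts]
  constructor
  · intro hl
    have h1 : (kDFA φ).evalFrom (some (oneRS φ)) l = some (oneRS φ) := hl
    have := kfwd φ l _ _ h1
    have hone : ((oneRS φ : ↥(RS φ)) : ↥(MonoidHom.mrange φ)) = 1 := rfl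
    rw [hone, one_mul] at this
    have : φ.mrangeRestrict (ofList l) = 1 := this.symm
    have : (φ.mrangeRestrict (ofList l) : M) = ((1 : ↥(MonoidHom.mrange φ)) : M) := by rw [this]
    exact (show φ (ofList l) = 1 by simpa [MonoidHom.coe_mrangeRestrict] using this)
  · intro hl
    have hl' : φ.mrangeRestrict (ofList l) = 1 := by
      apply Subtype.ext
      simpa [MonoidHom.coe_mrangeRestrict] using (show φ (ofList l) = 1 from hl)
    have hmem : (((oneRS φ : ↥(RS φ)) : ↥(MonoidHom.mrange φ)) * φ.mrangeRestrict (ofList l)) ∈ RS φ := by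
      refine ⟨1, ?_⟩
      show ((oneRS φ : ↥(RS φ)) : ↥(MonoidHom.mrange φ)) * φ.mrangeRestrict (ofList l) * 1 = 1
      rw [hl']
      show ((1 : ↥(MonoidHom.mrange φ)) * 1 * 1 = 1)
      simp
    obtain ⟨c, hc⟩ := kbwd φ l _ hmem
    have hcv := kfwd φ l _ _ hc
    rw [hl'] at hcv
    have : c = oneRS φ := by
      apply Subtype.ext
      rw [hcv]
      show ((1 : ↥(MonoidHom.mrange φ)) * 1 = 1)
      simp
    show (kDFA φ).evalFrom (some (oneRS φ)) l ∈ _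
    rw [hc, this]
    exact rfl

end Kernel

section Image

variable {X Y : Type} {σ : Type*} (out : Y → List X) (D : DFA Y σ)

def outL : List Y → List X := fun w => (w.map out).flatten

@[simp] lemma outL_nil : outL out [] = [] := rfl

@[simp] lemma outL_cons (y : Y) (w : List Y) : outL out (y :: w) = out y ++ outL out w := rfl

lemma outL_append (w w' : List Y) : outL out (w ++ w') = outL out w ++ outL out w' := by
  simp [outL]

/-- Reachability by erasing (empty-output) letters. -/
def ER (q : σ) : Set σ :=
  {q' | Relation.ReflTransGen (fun a b => ∃ y, out y = [] ∧ D.step a y = b) q q'}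

lemma ER_refl (q : σ) : q ∈ ER out D q := Relation.ReflTransGen.refl

lemma ER_trans {q q' q'' : σ} (h : q' ∈ ER out D q) (h' : q'' ∈ ER out D q') :
    q'' ∈ ER out D q := Relation.ReflTransGen.trans h h'

lemma ER_step {q : σ} {y : Y} (hy : out y = []) : D.step q y ∈ ER out D q :=
  Relation.ReflTransGen.single ⟨y, hy, rfl⟩

lemma ER_words {q q' : σ} (h : q' ∈ ER out D q) :
    ∃ v : List Y, outL out v = [] ∧ D.evalFrom q v = q' := by
  induction h with
  | refl => exact ⟨[], rfl, rfl⟩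
  | tail _ hbc ih =>
    obtain ⟨v, hv, hev⟩ := ih
    obtain ⟨y, hy, hstep⟩ := hbc
    refine ⟨v ++ [y], ?_, ?_⟩
    · rw [outL_append, hv]; simpa [outL] using hy
    · rw [DFA.evalFrom_of_append, hev]
      simpa using hstep

/-- The set of possible pending outputs. -/
def SufS : Set (List X) := insert [] {l | ∃ y, l <:+ out y}

lemma nil_mem_SufS : ([] : List X) ∈ SufS out := Set.mem_insert _ _

lemma SufS_tail {x : X} {l : List X} (h : (x :: l) ∈ SufS out) : l ∈ SufS out := by
  rcases h with h | ⟨y, hy⟩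
  · exact absurd h (by simp)
  · exact Or.inr ⟨y, (List.suffix_cons x l).trans hy⟩

lemma SufS_finite [Fintype Y] : (SufS out).Finite := by
  refine Set.Finite.insert _ ?_
  have : {l : List X | ∃ y, l <:+ out y} ⊆ ⋃ y : Y, {l | l ∈ (out y).tails} := by
    intro l ⟨y, hy⟩
    exact Set.mem_iUnion.mpr ⟨y, (List.mem_tails _ _).mpr hy⟩
  refine Set.Finite.subset (Set.finite_iUnion fun y => ?_) this
  exact (out y).tails.finite_toSet

def nilS : ↥(SufS out) := ⟨[], nil_mem_SufS out⟩

/-- States with empty pending whose first component is erasure-reachable from `q`. -/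
def PS (q : σ) : Set (σ × ↥(SufS out)) := {p | p.1 ∈ ER out D q ∧ p.2 = nilS out}

/-- Target set: new DFA state `r`, remaining pending `l`. -/
def tgtL (r : σ) (l : List X) : Set (σ × ↥(SufS out)) :=
  {p' | (l = [] ∧ p' ∈ PS out D r) ∨ (l ≠ [] ∧ p'.1 = r ∧ (p'.2 : List X) = l)}

/-- The image NFA. -/
def imgNFA : NFA X (σ × ↥(SufS out)) where
  step := fun p x =>
    {p' | ((p.2 : List X) = [] ∧ ∃ q₀ ∈ ER out D p.1, ∃ y l',
            out y = x :: l' ∧ p' ∈ tgtL out D (D.step q₀ y) l')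
          ∨ (∃ l', (p.2 : List X) = x :: l' ∧ p' ∈ tgtL out D p.1 l')}
  start := PS out D D.start
  accept := {p | (p.2 : List X) = [] ∧ p.1 ∈ D.accept}

lemma tgt_sub_eval : ∀ (l : List X), l ∈ SufS out → ∀ (r : σ) (S' : Set (σ × ↥(SufS out))),
    tgtL out D r l ⊆ S' → PS out D r ⊆ (imgNFA out D).evalFrom S' l := by
  intro l
  induction l with
  | nil =>
    intro _ r S' hsub
    intro p hp
    exact hsub (Or.inl ⟨rfl, hp⟩)
  | cons x l ih =>
    intro hmem r S' hsub
    have hl : l ∈ SufS out := SufS_tail out hmem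
    have hstate : ((r, ⟨x :: l, hmem⟩) : σ × ↥(SufS out)) ∈ S' :=
      hsub (Or.inr ⟨List.cons_ne_nil _ _, rfl, rfl⟩)
    have hsub2 : tgtL out D r l ⊆ (imgNFA out D).stepSet S' x := by
      intro p' hp'
      rw [NFA.mem_stepSet]
      exact ⟨_, hstate, Or.inr ⟨l, rfl, hp'⟩⟩
    exact ih hl r _ hsub2

lemma completeness : ∀ (w : List Y) (q : σ) (S : Set (σ × ↥(SufS out))),
    PS out D q ⊆ S → PS out D (D.evalFrom q w) ⊆ (imgNFA out D).evalFrom S (outL out w) := by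
  intro w
  induction w with
  | nil => intro q S h; exact h
  | cons y w ih =>
    intro q S hS
    rw [outL_cons, evalFrom_app]
    show PS out D (D.evalFrom (D.step q y) w) ⊆ _
    rcases hout : out y with _ | ⟨x, l⟩
    · have h1 : PS out D (D.step q y) ⊆ S := by
        intro p hp
        exact hS ⟨ER_trans out D (ER_step out D hout) hp.1, hp.2⟩
      exact ih (D.step q y) _ (by simpa using h1)
    · apply ih (D.step q y)
      have hmem : x :: l ∈ SufS out := Or.inr ⟨y, hout ▸ List.suffix_refl _⟩
      have hsub : tgtL out D (D.step q y) l ⊆ (imgNFA out D).stepSet S x := by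
        intro p' hp'
        rw [NFA.mem_stepSet]
        refine ⟨(q, nilS out), hS ⟨ER_refl out D q, rfl⟩, Or.inl ⟨rfl, q, ER_refl out D q, y, l, hout, hp'⟩⟩
      have := tgt_sub_eval out D l (SufS_tail out hmem) (D.step q y) _ hsub
      intro p hp
      exact evalFrom_mono _ (le_refl _) l (this hp)

def Inv (xs : List X) (p : σ × ↥(SufS out)) : Prop :=
  ∃ w : List Y, outL out w = xs ++ (p.2 : List X) ∧ D.evalFrom D.start w = p.1

lemma soundness : ∀ (xs : List X) (p : σ × ↥(SufS out)),
    p ∈ (imgNFA out D).evalFrom (imgNFA out D).start xs → Inv out D xs p := by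
  intro xs
  induction xs using List.reverseRecOn with
  | nil =>
    intro p hp
    obtain ⟨hER, h2⟩ := hp
    obtain ⟨v, hv, hev⟩ := ER_words out D hER
    exact ⟨v, by simp [hv, h2, nilS], hev⟩
  | append_singleton xs x ih =>
    intro p hp
    rw [NFA.evalFrom_append, NFA.evalFrom_singleton, NFA.mem_stepSet] at hp
    obtain ⟨p₀, hp₀, hstep⟩ := hp
    obtain ⟨w, hw, hev⟩ := ih p₀ hp₀
    rcases hstep with ⟨h0, q₀, hq₀, y, l', houty, htgt⟩ | ⟨l', h0, htgt⟩
    · rw [h0, List.append_nil] at hw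
      obtain ⟨v, hv, hevv⟩ := ER_words out D hq₀
      have hev2 : D.evalFrom D.start (w ++ v ++ [y]) = D.step q₀ y := by
        rw [DFA.evalFrom_of_append, DFA.evalFrom_of_append, hev, hevv]
        rfl
      have hout2 : outL out (w ++ v ++ [y]) = xs ++ (x :: l') := by
        rw [outL_append, outL_append, hw, hv]
        simp [outL, houty]
      rcases htgt with ⟨hl', hP⟩ | ⟨hl', h1, h2⟩
      · obtain ⟨hER2, hnil⟩ := hP
        obtain ⟨v2, hv2, hev3⟩ := ER_words out D hER2
        refine ⟨w ++ v ++ [y] ++ v2, ?_, ?_⟩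
        · rw [outL_append, hout2, hv2, hl', hnil]
          simp [nilS]
        · rw [DFA.evalFrom_of_append, hev2, hev3]
      · refine ⟨w ++ v ++ [y], ?_, ?_⟩
        · rw [hout2, h2]
          simp
        · rw [hev2, h1]
    · rw [h0] at hw
      rcases htgt with ⟨hl', hP⟩ | ⟨hl', h1, h2⟩
      · obtain ⟨hER2, hnil⟩ := hP
        obtain ⟨v2, hv2, hev3⟩ := ER_words out D hER2
        refine ⟨w ++ v2, ?_, ?_⟩
        · rw [outL_append, hw, hv2, hnil, hl']
          simp [nilS]
        · rw [DFA.evalFrom_of_append, hev, hev3]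
      · refine ⟨w, ?_, ?_⟩
        · rw [hw, h2]
          simp
        · rw [hev, h1]

theorem imgNFA_accepts :
    (imgNFA out D).accepts = {xs : List X | ∃ w : List Y, outL out w = xs ∧ w ∈ D.accepts} := by
  ext xs
  rw [NFA.mem_accepts]
  constructor
  · rintro ⟨p, hacc, hin⟩
    obtain ⟨w, hw, hev⟩ := soundness out D xs p hin
    refine ⟨w, ?_, ?_⟩
    · rw [hw, hacc.1, List.append_nil]
    · rw [DFA.mem_accepts]
      show D.evalFrom D.start w ∈ D.accept
      rw [hev]
      exact hacc.2
  · rintro ⟨w, hw, hacc⟩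
    have := completeness out D w D.start _ (le_refl _)
    refine ⟨(D.evalFrom D.start w, nilS out), ⟨rfl, hacc⟩, ?_⟩
    rw [← hw]
    exact this ⟨ER_refl out D _, rfl⟩

end Image







section Syntactic

variable {Y : Type} (L : Language Y)

/-- The syntactic congruence of a language on the free monoid. -/
def synCon : Con (FreeMonoid Y) where
  r u v := ∀ x y : FreeMonoid Y, (toList (x * u * y) ∈ L ↔ toList (x * v * y) ∈ L)
  iseqv := ⟨fun _ _ _ => Iff.rfl, fun h x y => (h x y).symm,
    fun h h' x y => (h x y).trans (h' x y)⟩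
  mul' := by
    intro a b cc d h1 h2 x y
    have e1 := h1 x (cc * y)
    have e2 := h2 (x * b) y
    simp only [← mul_assoc] at e1 e2 ⊢
    exact e1.trans e2

theorem synCon_finite {σ : Type} [Fintype σ] (D : DFA Y σ) (hD : D.accepts = L) :
    Finite (synCon L).Quotient := by
  classical
  set f : FreeMonoid Y → (σ → σ) := fun u q => D.evalFrom q (toList u) with hf
  have key : ∀ u v : FreeMonoid Y, f u = f v → synCon L u v := by
    intro u v huv x y
    have hmem : ∀ w : FreeMonoid Y, toList w ∈ L ↔ D.evalFrom D.start (toList w) ∈ D.accept := by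
      intro w
      rw [← hD]
      exact Iff.rfl
    rw [hmem, hmem, toList_mul, toList_mul, toList_mul, toList_mul,
      DFA.evalFrom_of_append, DFA.evalFrom_of_append,
      DFA.evalFrom_of_append, DFA.evalFrom_of_append]
    have : D.evalFrom (D.evalFrom D.start (toList x)) (toList u)
        = D.evalFrom (D.evalFrom D.start (toList x)) (toList v) := by
      have := congrFun huv (D.evalFrom D.start (toList x))
      exact this
    rw [this]
  have hsurj : Function.Surjective
      (fun t : Set.range f => ((Classical.choose t.2 : FreeMonoid Y) : (synCon L).Quotient)) := by
    intro q
    induction q using Con.induction_on with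
    | H u =>
      refine ⟨⟨f u, u, rfl⟩, ?_⟩
      have hspec : f (Classical.choose (⟨u, rfl⟩ : ∃ w, f w = f u)) = f u :=
        Classical.choose_spec (⟨u, rfl⟩ : ∃ w, f w = f u)
      exact (Con.eq _).mpr (key _ _ hspec)
  exact Finite.of_surjective _ hsurj

end Syntactic

theorem fri_of_regular {M : Type*} [Monoid M] {Y : Type} (φ : FreeMonoid Y →* M)
    (hreg : Language.IsRegular {l : List Y | φ (ofList l) = 1}) :
    {a : ↥(MonoidHom.mrange φ) | ∃ b, a * b = 1}.Finite := by
  classical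
  obtain ⟨σ, hfin, D, hD⟩ := hreg
  set L : Language Y := {l : List Y | φ (ofList l) = 1} with hL
  have memL : ∀ z : FreeMonoid Y, toList z ∈ L ↔ φ z = 1 := by
    intro z
    show φ (ofList (toList z)) = 1 ↔ φ z = 1
    rw [ofList_toList]
  haveI : Finite (synCon L).Quotient := synCon_finite L D hD
  -- a word representing each element of the range
  have hwd : ∀ a : ↥(MonoidHom.mrange φ), ∃ w : FreeMonoid Y, φ w = ↑a := fun a => a.2
  set wd : ↥(MonoidHom.mrange φ) → FreeMonoid Y := fun a => Classical.choose (hwd a) with hwddef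
  have wd_spec : ∀ a, φ (wd a) = ↑a := fun a => Classical.choose_spec (hwd a)
  rw [← Set.finite_coe_iff]
  refine Finite.of_injective
    (fun p : ↥{a : ↥(MonoidHom.mrange φ) | ∃ b, a * b = 1} =>
      ((wd ↑p : FreeMonoid Y) : (synCon L).Quotient)) ?_
  intro p p' hG
  obtain ⟨b, hb⟩ := p.2
  obtain ⟨b', hb'⟩ := p'.2
  set u := wd ↑p
  set u' := wd ↑p'
  set v := wd b
  have huv : φ u * φ v = 1 := by
    rw [wd_spec, wd_spec, ← Submonoid.coe_mul, hb, Submonoid.coe_one]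
  -- ⟦u⟧ * ⟦v⟧ = 1 in the quotient
  have hq1 : ((u : (synCon L).Quotient) * (v : (synCon L).Quotient)) = 1 := by
    show ((u * v : FreeMonoid Y) : (synCon L).Quotient) = ((1 : FreeMonoid Y) : _)
    refine (Con.eq _).mpr ?_
    intro x y
    rw [memL, memL]
    simp [map_mul, mul_assoc, ← mul_assoc (φ u), huv]
  have hq2 := mul_eq_one_comm_of_finite hq1
  have hvu : φ v * φ u = 1 := by
    have : ((v * u : FreeMonoid Y) : (synCon L).Quotient) = ((1 : FreeMonoid Y) : _) := hq2
    have hrel := (Con.eq _).mp this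
    have := (hrel 1 1)
    rw [memL, memL] at this
    simpa [map_mul] using this.mpr (by simp)
  -- from hG : classes of u and u' agree
  have hrel : synCon L u u' := (Con.eq _).mp hG
  have hu'v : φ u' * φ v = 1 := by
    have := hrel 1 v
    rw [memL, memL] at this
    have h1 : φ (1 * u * v) = 1 := by simp [map_mul, ← mul_assoc, huv]
    simpa [map_mul, mul_assoc] using this.mp h1
  -- now conclude
  have hmain : ((↑p : ↥(MonoidHom.mrange φ)) : M) = ((↑p' : ↥(MonoidHom.mrange φ)) : M) := by
    have e1 : ((↑p' : ↥(MonoidHom.mrange φ)) : M) * (φ v * φ u) = ↑↑p' := by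
      rw [hvu, mul_one]
    calc ((↑p : ↥(MonoidHom.mrange φ)) : M) = (φ u' * φ v) * φ u := by
          rw [hu'v, one_mul, wd_spec]
      _ = φ u' * (φ v * φ u) := by rw [mul_assoc]
      _ = ↑↑p' := by rw [hvu, mul_one, wd_spec]
  have : (↑p : ↥(MonoidHom.mrange φ)) = ↑p' := Subtype.ext hmain
  exact Subtype.ext this

theorem univ_regular {Y : Type} : Language.IsRegular (Set.univ : Language Y) :=
  ⟨Unit, inferInstance, ⟨fun _ _ => (), (), Set.univ⟩,
    Set.eq_univ_of_forall fun _ => trivial⟩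

lemma outL_eq_h {X Y : Type} (h : FreeMonoid Y →* FreeMonoid X) (w : List Y) :
    outL (fun y => toList (h (of y))) w = toList (h (ofList w)) := by
  induction w with
  | nil =>
    show ([] : List X) = toList (h 1)
    rw [map_one]
    rfl
  | cons y w ih =>
    rw [outL_cons, ih, ofList_cons, map_mul, toList_mul]

theorem regular_of_VA {M : Type*} [Monoid M] (hFRI : IsFRI M) {X : Type}
    (L : Language X) (hva : VA M L) : L.IsRegular := by
  classical
  obtain ⟨Y, YFin, R, φ, h, hReg, hL⟩ := hva
  -- the range of φ is finitely generated
  have hNfg : (MonoidHom.mrange φ).FG := by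
    rw [Submonoid.fg_iff]
    refine ⟨Set.range (⇑φ ∘ of), ?_, Set.finite_range _⟩
    exact (FreeMonoid.mrange_lift (⇑φ ∘ of)).symm.trans
      (by rw [FreeMonoid.lift_restrict])
  have hfin : (RS φ).Finite := hFRI _ hNfg
  haveI : Fintype ↥(RS φ) := hfin.fintype
  obtain ⟨σR, finR, DR, hDR⟩ := hReg
  -- a `Type 0` copy of the kernel DFA
  set e : ↥(RS φ) ≃ Fin (Fintype.card ↥(RS φ)) := Fintype.equivFin _ with he
  set D2 : DFA Y (Option (Fin (Fintype.card ↥(RS φ)))) :=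
    DFA.reindex (Equiv.optionCongr e) (kDFA φ) with hD2
  have hD2acc : D2.accepts = {l : List Y | φ (ofList l) = 1} := by
    rw [hD2, DFA.accepts_reindex, kDFA_accepts]
  set D3 := prodDFA DR D2 with hD3
  set out : Y → List X := fun y => toList (h (of y)) with hout
  haveI : Fintype ↥(SufS out) := (SufS_finite out).fintype
  refine ⟨Set ((σR × Option (Fin (Fintype.card ↥(RS φ)))) × ↥(SufS out)), Fintype.ofFinite _,
    (imgNFA out D3).toDFA, ?_⟩
  rw [NFA.toDFA_correct, imgNFA_accepts, hL]
  ext xs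
  constructor
  · rintro ⟨w, hw, hacc⟩
    rw [prodDFA_accepts, hDR, hD2acc] at hacc
    refine ⟨ofList w, ⟨?_, ?_⟩, ?_⟩
    · exact hacc.1
    · exact hacc.2
    · rw [← hw, outL_eq_h]
  · rintro ⟨w, ⟨hwR, hw1⟩, hxs⟩
    refine ⟨toList w, ?_, ?_⟩
    · rw [outL_eq_h, ofList_toList]
      exact hxs
    · rw [prodDFA_accepts, hDR, hD2acc]
      refine ⟨hwR, ?_⟩
      show φ (ofList (toList w)) = 1
      rw [ofList_toList]
      exact hw1

theorem VA_of_regular {M : Type*} [Monoid M] {X : Type} [Fintype X]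
    (L : Language X) (hreg : L.IsRegular) : VA M L := by
  refine ⟨X, inferInstance, L, 1, MonoidHom.id _, hreg, ?_⟩
  ext l
  constructor
  · intro hl
    exact ⟨ofList l, ⟨hl, rfl⟩, rfl⟩
  · rintro ⟨w, ⟨hw, -⟩, hwl⟩
    have : toList w = l := hwl
    rw [← this]
    exact hw

/-- A monoid `M` is an FRI-monoid iff for every finite alphabet `X`,
a language `L ⊆ X*` lies in `VA M` exactly when it is regular. -/
theorem stmt5 (M : Type*) [Monoid M] :
    IsFRI M ↔ ∀ (X : Type) (_ : Fintype X) (L : Language X), (VA M L ↔ L.IsRegular) := by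

  constructor
  · intro hFRI X fX L
    haveI := fX
    exact ⟨fun hva => regular_of_VA hFRI L hva, fun hreg => VA_of_regular L hreg⟩
  · intro hyp N hNfg
    obtain ⟨S, hS⟩ := hNfg
    classical
    set n := Fintype.card ↥S with hn
    set f : Fin n → M := fun i => ↑((Fintype.equivFin ↥S).symm i) with hf
    set φ : FreeMonoid (Fin n) →* M := FreeMonoid.lift f with hφ
    have hrangef : Set.range f = ↑S := by
      ext x
      constructor
      · rintro ⟨i, rfl⟩
        exact ((Fintype.equivFin ↥S).symm i).2
      · intro hx
        exact ⟨Fintype.equivFin ↥S ⟨x, hx⟩, by simp [hf]⟩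
    have hrange : MonoidHom.mrange φ = N := by
      rw [hφ, FreeMonoid.mrange_lift, hrangef, hS]
    set L : Language (Fin n) := {l | φ (ofList l) = 1} with hLdef
    have hva : VA M L := by
      refine ⟨Fin n, inferInstance, Set.univ, φ, MonoidHom.id _, univ_regular, ?_⟩
      ext l
      constructor
      · intro hl
        exact ⟨ofList l, ⟨trivial, hl⟩, rfl⟩
      · rintro ⟨w, ⟨-, hw⟩, hwl⟩
        have : toList w = l := hwl
        show φ (ofList l) = 1
        rw [← this, ofList_toList]
        exact hw
    have hreg : L.IsRegular := (hyp _ inferInstance L).mp hva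
    have hfin := fri_of_regular φ hreg
    rw [hrange] at hfin
    exact hfin


end Paper
end

section
/- Let M₀ and M₁ be monoids such that neither M₀ nor M₁ is an FRI-monoid. Then there exist a finite alphabet X and a language L ⊆ X* with L ∈ VA(M₀ × M₁) such that L is not context-free. -/
namespace Paper

namespace Pump

open ContextFreeGrammar

variable {T : Type} {g : ContextFreeGrammar T}

/-- Counted derivations. -/
inductive DerivesIn (g : ContextFreeGrammar T) :
    List (Symbol T g.NT) → List (Symbol T g.NT) → ℕ → Prop
  | refl (u : List (Symbol T g.NT)) : DerivesIn g u u 0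
  | head {u v w : List (Symbol T g.NT)} {n : ℕ} :
      g.Produces u v → DerivesIn g v w n → DerivesIn g u w (n + 1)

lemma DerivesIn.toDerives {u v : List (Symbol T g.NT)} {n : ℕ}
    (h : DerivesIn g u v n) : g.Derives u v := by
  induction h with
  | refl => exact Derives.refl _
  | head hp _ ih => exact hp.trans_derives ih

lemma DerivesIn.trans {u v w : List (Symbol T g.NT)} {m n : ℕ}
    (h₁ : DerivesIn g u v m) (h₂ : DerivesIn g v w n) : DerivesIn g u w (m + n) := by
  induction h₁ with
  | refl => simpa using h₂
  | head hp _ ih => exact Nat.succ_add _ n ▸ DerivesIn.head hp (ih h₂)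

lemma derives_iff_derivesIn {u v : List (Symbol T g.NT)} :
    g.Derives u v ↔ ∃ n, DerivesIn g u v n := by
  constructor
  · intro h
    induction h using Relation.ReflTransGen.head_induction_on with
    | refl => exact ⟨0, DerivesIn.refl _⟩
    | head hp _ ih => exact ⟨_, DerivesIn.head hp ih.choose_spec⟩
  · rintro ⟨n, h⟩; exact h.toDerives

lemma DerivesIn.append_left {v w : List (Symbol T g.NT)} {n : ℕ}
    (h : DerivesIn g v w n) (p : List (Symbol T g.NT)) :
    DerivesIn g (p ++ v) (p ++ w) n := by
  induction h with
  | refl => exact DerivesIn.refl _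
  | head hp _ ih => exact DerivesIn.head (hp.append_left p) ih

lemma DerivesIn.append_right {v w : List (Symbol T g.NT)} {n : ℕ}
    (h : DerivesIn g v w n) (p : List (Symbol T g.NT)) :
    DerivesIn g (v ++ p) (w ++ p) n := by
  induction h with
  | refl => exact DerivesIn.refl _
  | head hp _ ih => exact DerivesIn.head (hp.append_right p) ih

/-- Parse forests. -/
inductive PF (g : ContextFreeGrammar T) : List (Symbol T g.NT) → List T → Type _
  | nil : PF g [] []
  | term {s : List (Symbol T g.NT)} {w : List T} (t : T) :
      PF g s w → PF g (Symbol.terminal t :: s) (t :: w)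
  | nt {s : List (Symbol T g.NT)} {w₁ w₂ : List T} (r : ContextFreeRule T g.NT)
      (hr : r ∈ g.rules) : PF g r.output w₁ → PF g s w₂ →
      PF g (Symbol.nonterminal r.input :: s) (w₁ ++ w₂)

namespace PF

def size {s : List (Symbol T g.NT)} {w : List T} : PF g s w → ℕ
  | .nil => 0
  | .term _ f => f.size
  | .nt _ _ f₁ f₂ => 1 + f₁.size + f₂.size

def ht {s : List (Symbol T g.NT)} {w : List T} : PF g s w → ℕ
  | .nil => 0
  | .term _ f => f.ht
  | .nt _ _ f₁ f₂ => max (f₁.ht + 1) f₂.ht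

lemma sound {s : List (Symbol T g.NT)} {w : List T} (f : PF g s w) :
    DerivesIn g s (w.map Symbol.terminal) f.size := by
  induction f with
  | nil => exact DerivesIn.refl _
  | term t f ih =>
      have := ih.append_left [Symbol.terminal t]
      simpa [size] using this
  | @nt s w₁ w₂ r hr f₁ f₂ ih₁ ih₂ =>
      have hstep : g.Produces (Symbol.nonterminal r.input :: s)
          (r.output ++ s) := ⟨r, hr, ContextFreeRule.Rewrites.head _⟩
      have d₁ := ih₁.append_right s
      have d₂ := ih₂.append_left (w₁.map Symbol.terminal)
      have := DerivesIn.head hstep (d₁.trans d₂)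
      rw [List.map_append]
      show DerivesIn g _ _ (1 + f₁.size + f₂.size)
      have harith : f₁.size + f₂.size + 1 = 1 + f₁.size + f₂.size := by omega
      exact harith ▸ this

def ofTerms (g : ContextFreeGrammar T) : (w : List T) → PF g (w.map Symbol.terminal) w
  | [] => .nil
  | t :: w => .term t (ofTerms g w)

lemma size_ofTerms (g : ContextFreeGrammar T) (w : List T) : (ofTerms g w).size = 0 := by
  induction w with
  | nil => rfl
  | cons t w ih => simpa [ofTerms, size] using ih

lemma split {s₂ : List (Symbol T g.NT)} :
    ∀ (s₁ : List (Symbol T g.NT)) {w : List T} (f : PF g (s₁ ++ s₂) w),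
    ∃ (w₁ w₂ : List T) (f₁ : PF g s₁ w₁) (f₂ : PF g s₂ w₂),
      w = w₁ ++ w₂ ∧ f₁.size + f₂.size = f.size
  | [], w, f => ⟨[], w, .nil, f, rfl, by simp [size]⟩
  | a :: s₁, w, f => by
    cases f with
    | term t f' =>
        obtain ⟨w₁, w₂, f₁, f₂, hw, hs⟩ := split s₁ f'
        exact ⟨t :: w₁, w₂, .term t f₁, f₂, by simp [hw], by simpa [size] using hs⟩
    | nt r hr fout frest =>
        obtain ⟨w₁, w₂, f₁, f₂, hw, hs⟩ := split s₁ frest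
        refine ⟨_ ++ w₁, w₂, .nt r hr fout f₁, f₂, by simp [hw], by simp [size]; omega⟩

lemma happend {s₁ s₂ : List (Symbol T g.NT)} {w₁ w₂ : List T}
    (f₁ : PF g s₁ w₁) (f₂ : PF g s₂ w₂) :
    ∃ f : PF g (s₁ ++ s₂) (w₁ ++ w₂), f.size = f₁.size + f₂.size := by
  induction f₁ with
  | nil => exact ⟨f₂, by simp [size]⟩
  | term t f ih =>
      obtain ⟨f', hf'⟩ := ih
      exact ⟨.term t f', by simpa [size] using hf'⟩
  | @nt s w₁' w₂' r hr fout f ih_out ih =>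
      obtain ⟨f', hf'⟩ := ih
      rw [List.append_assoc]
      exact ⟨.nt r hr fout f', by simp [size]; omega⟩

lemma complete : ∀ (n : ℕ) (s : List (Symbol T g.NT)) (w : List T),
    DerivesIn g s (w.map Symbol.terminal) n → ∃ f : PF g s w, f.size = n := by
  intro n
  induction n with
  | zero =>
      intro s w h
      cases h
      exact ⟨ofTerms g w, size_ofTerms g w⟩
  | succ n ih =>
      intro s w h
      cases h with
      | head hp hd =>
        obtain ⟨r, hr, hrw⟩ := hp
        obtain ⟨p, q, hs, hv⟩ := hrw.exists_parts
        obtain ⟨f', hf'⟩ := ih (p ++ (r.output ++ q)) w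
          (by rw [hv] at hd; simpa [List.append_assoc] using hd)
        obtain ⟨w₁, wrest, f₁, frest, hw, hsz⟩ := split p f'
        obtain ⟨w₂, w₃, f₂, f₃, hw2, hsz2⟩ := split r.output frest
        have hmid : ∃ f : PF g (p ++ (Symbol.nonterminal r.input :: q)) (w₁ ++ (w₂ ++ w₃)),
            f.size = f₁.size + (1 + f₂.size + f₃.size) :=
          happend f₁ (.nt r hr f₂ f₃)
        obtain ⟨f, hf⟩ := hmid
        rw [hs]
        have hseq : p ++ [Symbol.nonterminal r.input] ++ q
            = p ++ (Symbol.nonterminal r.input :: q) := by simp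
        rw [hseq, hw, hw2]
        exact ⟨f, by omega⟩

lemma len_le {m : ℕ} (hm : 1 ≤ m) (hrules : ∀ r ∈ g.rules, r.output.length ≤ m) :
    ∀ {s : List (Symbol T g.NT)} {w : List T} (f : PF g s w),
    w.length ≤ s.length * m ^ f.ht := by
  intro s w f
  induction f with
  | nil => simp
  | @term s w t f ih =>
      have h1 : 1 ≤ m ^ f.ht := Nat.one_le_pow _ _ hm
      calc (t :: w).length = w.length + 1 := by simp
        _ ≤ s.length * m ^ f.ht + 1 := by omega
        _ ≤ s.length * m ^ (PF.term t f).ht + 1 := by simp [ht]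
        _ ≤ (s.length + 1) * m ^ (PF.term t f).ht := by
              have : 1 ≤ m ^ (PF.term t f).ht := Nat.one_le_pow _ _ hm
              nlinarith
        _ = (Symbol.terminal t :: s).length * m ^ (PF.term t f).ht := by simp
  | @nt s w₁ w₂ r hr f₁ f₂ ih₁ ih₂ =>
      have hh : (PF.nt r hr f₁ f₂).ht = max (f₁.ht + 1) f₂.ht := rfl
      have h₁ : w₁.length ≤ m ^ (f₁.ht + 1) := by
        calc w₁.length ≤ r.output.length * m ^ f₁.ht := ih₁
          _ ≤ m * m ^ f₁.ht := by
              have := hrules r hr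
              exact Nat.mul_le_mul_right _ this
          _ = m ^ (f₁.ht + 1) := by ring
      have h₂ : w₂.length ≤ s.length * m ^ f₂.ht := ih₂
      have hp₁ : m ^ (f₁.ht + 1) ≤ m ^ (PF.nt r hr f₁ f₂).ht :=
        Nat.pow_le_pow_right hm (by rw [hh]; exact le_max_left _ _)
      have hp₂ : m ^ f₂.ht ≤ m ^ (PF.nt r hr f₁ f₂).ht :=
        Nat.pow_le_pow_right hm (by rw [hh]; exact le_max_right _ _)
      calc (w₁ ++ w₂).length = w₁.length + w₂.length := by simp
        _ ≤ m ^ (f₁.ht + 1) + s.length * m ^ f₂.ht := by omega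
        _ ≤ m ^ (PF.nt r hr f₁ f₂).ht + s.length * m ^ (PF.nt r hr f₁ f₂).ht := by
              have := Nat.mul_le_mul_left s.length hp₂
              omega
        _ = (Symbol.nonterminal r.input :: s).length * m ^ (PF.nt r hr f₁ f₂).ht := by
              simp; ring

end PF

open PF

attribute [local instance] Classical.decEq

variable (g) in
/-- The finite set of nonterminals that can label nodes of parse trees. -/
noncomputable def inputs : Finset g.NT :=
  g.rules.image fun r => r.input

lemma rootIn {A : g.NT} {w : List T} (f : PF g [Symbol.nonterminal A] w) : A ∈ inputs g := by
  cases f with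
  | nt r hr f₁ f₂ => exact Finset.mem_image.2 ⟨r, hr, rfl⟩

lemma hole {s : List (Symbol T g.NT)} {w : List T} (f : PF g s w) (h1 : 1 ≤ f.ht) :
    ∃ (C : g.NT) (a b w₁ : List T) (c₀ : ℕ), C ∈ inputs g ∧ w = a ++ w₁ ++ b ∧
      DerivesIn g s
        (a.map Symbol.terminal ++ [Symbol.nonterminal C] ++ b.map Symbol.terminal) c₀ ∧
      ∃ f₁ : PF g [Symbol.nonterminal C] w₁, f₁.size + c₀ = f.size ∧ f₁.ht = f.ht := by
  induction f with
  | nil => simp [PF.ht] at h1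
  | @term s w t f ih =>
      have h1' : 1 ≤ f.ht := h1
      obtain ⟨C, a, b, w₁, c₀, hC, hw, d, f₁, hsz, hht⟩ := ih h1'
      refine ⟨C, t :: a, b, w₁, c₀, hC, by simp [hw], ?_, f₁, by simpa [PF.size] using hsz,
        by simpa [PF.ht] using hht⟩
      have := d.append_left [Symbol.terminal t]
      simpa using this
  | @nt s w₁' w₂' r hr f₁ f₂ ih₁ ih₂ =>
      by_cases hc : f₂.ht ≤ f₁.ht + 1
      · have hhteq : (PF.nt r hr f₁ f₂).ht = f₁.ht + 1 := max_eq_left hc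
        refine ⟨r.input, [], w₂', w₁' ++ [], f₂.size, Finset.mem_image.2 ⟨r, hr, rfl⟩,
          by simp, ?_, PF.nt r hr f₁ PF.nil, by simp [PF.size], by rw [hhteq]; simp [PF.ht]⟩
        have := (sound f₂).append_left [Symbol.nonterminal r.input]
        simpa using this
      · push_neg at hc
        have hhteq : (PF.nt r hr f₁ f₂).ht = f₂.ht := max_eq_right hc.le
        have h1' : 1 ≤ f₂.ht := le_trans (by omega) hc.le
        obtain ⟨C, a, b, w₁, c₀, hC, hw, d, ft, hsz, hht⟩ := ih₂ h1'
        refine ⟨C, w₁' ++ a, b, w₁, 1 + f₁.size + c₀, hC, by simp [hw], ?_,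
          ft, by simp [PF.size]; omega, by rw [hht, hhteq]⟩
        have hstep : g.Produces (Symbol.nonterminal r.input :: s) (r.output ++ s) :=
          ⟨r, hr, ContextFreeRule.Rewrites.head _⟩
        have d₁ := (sound f₁).append_right s
        have d₂ := d.append_left (w₁'.map Symbol.terminal)
        have dfull := DerivesIn.head hstep (d₁.trans d₂)
        have harith : f₁.size + c₀ + 1 = 1 + f₁.size + c₀ := by omega
        rw [← harith]
        simpa [List.append_assoc] using dfull

lemma roothole {A : g.NT} {w : List T} (f : PF g [Symbol.nonterminal A] w) (h2 : 2 ≤ f.ht) :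
    ∃ (C : g.NT) (a b w₁ : List T) (c₀ : ℕ), C ∈ inputs g ∧ w = a ++ w₁ ++ b ∧
      DerivesIn g [Symbol.nonterminal A]
        (a.map Symbol.terminal ++ [Symbol.nonterminal C] ++ b.map Symbol.terminal) c₀ ∧
      1 ≤ c₀ ∧
      ∃ f₁ : PF g [Symbol.nonterminal C] w₁, f₁.size + c₀ = f.size ∧ f₁.ht + 1 = f.ht := by
  cases f with
  | nt r hr f₁ f₂ =>
    cases f₂ with
    | nil =>
      have hht : (PF.nt r hr f₁ PF.nil).ht = f₁.ht + 1 := by simp [PF.ht]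
      have h1 : 1 ≤ f₁.ht := by rw [hht] at h2; omega
      obtain ⟨C, a, b, w₁, c₀, hC, hw, d, ft, hsz, hfh⟩ := hole f₁ h1
      have hstep : g.Produces [Symbol.nonterminal r.input] r.output := by
        have : g.Produces (Symbol.nonterminal r.input :: ([] : List (Symbol T g.NT)))
            (r.output ++ []) := ⟨r, hr, ContextFreeRule.Rewrites.head _⟩
        simpa using this
      refine ⟨C, a, b, w₁, c₀ + 1, hC, by simp [hw], DerivesIn.head hstep d, by omega,
        ft, by simp [PF.size]; omega, by rw [hfh, hht]⟩

lemma down : ∀ (n : ℕ) {A : g.NT} {w : List T} (f : PF g [Symbol.nonterminal A] w),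
    f.size = n → ∀ (h' : ℕ), 1 ≤ h' → h' ≤ f.ht →
    ∃ (C : g.NT) (a b w₁ : List T) (c₀ : ℕ), C ∈ inputs g ∧ w = a ++ w₁ ++ b ∧
      DerivesIn g [Symbol.nonterminal A]
        (a.map Symbol.terminal ++ [Symbol.nonterminal C] ++ b.map Symbol.terminal) c₀ ∧
      ∃ f₁ : PF g [Symbol.nonterminal C] w₁, f₁.size + c₀ = f.size ∧ f₁.ht = h' := by
  intro n
  induction n using Nat.strong_induction_on with
  | _ n ih =>
    intro A w f hfn h' hh1 hh2
    rcases eq_or_lt_of_le hh2 with heq | hlt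
    · exact ⟨A, [], [], w, 0, rootIn f, by simp,
        by simpa using DerivesIn.refl [Symbol.nonterminal A], f, by simp, heq.symm⟩
    · have h2 : 2 ≤ f.ht := by omega
      obtain ⟨C', a, b, w₁, c₀, hC', hw, d, hc₀, f₁, hsz, hht⟩ := roothole f h2
      obtain ⟨C, a', b', w₁', c₀', hC, hw', d', f₂, hsz', hht'⟩ :=
        ih f₁.size (by omega) f₁ rfl h' hh1 (by omega)
      refine ⟨C, a ++ a', b' ++ b, w₁', c₀ + c₀', hC, by simp [hw, hw'], ?_, f₂, by omega, hht'⟩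
      have d₂ := (d'.append_left (a.map Symbol.terminal)).append_right (b.map Symbol.terminal)
      have := d.trans (by simpa [List.append_assoc] using d₂)
      simpa [List.append_assoc] using this

variable (g) in
/-- Either a pumpable pair rooted at `A`, or a lower occurrence of an NT in `F`. -/
def Found (A : g.NT) (w : List T) (n : ℕ) (F : Finset g.NT) : Prop :=
  (∃ (B : g.NT) (a v x y b : List T) (c₁ c₂ c₃ : ℕ),
      w = a ++ v ++ x ++ y ++ b ∧
      DerivesIn g [Symbol.nonterminal A]
        (a.map Symbol.terminal ++ [Symbol.nonterminal B] ++ b.map Symbol.terminal) c₁ ∧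
      DerivesIn g [Symbol.nonterminal B]
        (v.map Symbol.terminal ++ [Symbol.nonterminal B] ++ y.map Symbol.terminal) c₂ ∧
      1 ≤ c₂ ∧
      DerivesIn g [Symbol.nonterminal B] (x.map Symbol.terminal) c₃ ∧
      c₁ + c₂ + c₃ = n) ∨
  (∃ B ∈ F, ∃ (a x b : List T) (c₁ c₃ : ℕ),
      w = a ++ x ++ b ∧
      DerivesIn g [Symbol.nonterminal A]
        (a.map Symbol.terminal ++ [Symbol.nonterminal B] ++ b.map Symbol.terminal) c₁ ∧
      1 ≤ c₁ ∧
      DerivesIn g [Symbol.nonterminal B] (x.map Symbol.terminal) c₃ ∧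
      c₁ + c₃ = n)

lemma findRepeat : ∀ (n : ℕ) {A : g.NT} {w : List T} (F : Finset g.NT),
    A ∈ inputs g → F ⊆ inputs g → A ∉ F →
    ∀ (f : PF g [Symbol.nonterminal A] w), f.size = n →
    (inputs g).card + 1 ≤ f.ht + F.card → Found g A w n F := by
  intro n
  induction n using Nat.strong_induction_on with
  | _ n ih =>
    intro A w F hA hF hAF f hfn hht
    have hFlt : F.card < (inputs g).card :=
      Finset.card_lt_card (Finset.ssubset_iff_of_subset hF |>.2 ⟨A, hA, hAF⟩)
    have h2 : 2 ≤ f.ht := by omega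
    obtain ⟨C, a, b, w₁, c₀, hC, hw, d, hc₀, f₁, hsz, hhtC⟩ := roothole f h2
    by_cases hCA : C = A
    · subst hCA
      left
      refine ⟨C, [], a, w₁, b, [], 0, c₀, f₁.size, by simp [hw], ?_, ?_, hc₀, sound f₁, by omega⟩
      · simpa using DerivesIn.refl [Symbol.nonterminal C]
      · simpa using d
    · by_cases hCF : C ∈ F
      · right
        exact ⟨C, hCF, a, w₁, b, c₀, f₁.size, hw, d, hc₀, sound f₁, by omega⟩
      · have hrec := ih f₁.size (by omega) (insert A F) hC
          (Finset.insert_subset hA hF) (by simp [hCA, hCF]) f₁ rfl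
          (by rw [Finset.card_insert_of_notMem hAF]; omega)
        cases hrec with
        | inl hp =>
            obtain ⟨B, a', v, x, y, b', c₁, c₂, c₃, hw', d₁, d₂, hc₂, d₃, hsum⟩ := hp
            left
            refine ⟨B, a ++ a', v, x, y, b' ++ b, c₀ + c₁, c₂, c₃, by simp [hw, hw'], ?_, d₂, hc₂, d₃, by omega⟩
            have dd := (d₁.append_left (a.map Symbol.terminal)).append_right (b.map Symbol.terminal)
            have := d.trans (by simpa [List.append_assoc] using dd)
            simpa [List.append_assoc] using this
        | inr hp =>
            obtain ⟨B, hBmem, a', x, b', c₁, c₃, hw', d₁, hc₁, d₃, hsum⟩ := hp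
            have dmid : DerivesIn g [Symbol.nonterminal A]
                ((a ++ a').map Symbol.terminal ++ [Symbol.nonterminal B] ++
                  ((b' ++ b).map Symbol.terminal)) (c₀ + c₁) := by
              have dd := (d₁.append_left (a.map Symbol.terminal)).append_right (b.map Symbol.terminal)
              have := d.trans (by simpa [List.append_assoc] using dd)
              simpa [List.append_assoc] using this
            rcases Finset.mem_insert.1 hBmem with hBA | hBF
            · subst hBA
              left
              refine ⟨B, [], a ++ a', x, b' ++ b, [], 0, c₀ + c₁, c₃, by simp [hw, hw'], ?_, dmid, by omega, d₃, by omega⟩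
              simpa using DerivesIn.refl [Symbol.nonterminal B]
            · right
              exact ⟨B, hBF, a ++ a', x, b' ++ b, c₀ + c₁, c₃, by simp [hw, hw'], dmid, by omega, d₃, by omega⟩

/-- The downward pumping (shrinking) property of context-free grammars. -/
theorem shrink (g : ContextFreeGrammar T) :
    ∃ P : ℕ, 1 ≤ P ∧ ∀ w ∈ g.language, P < w.length →
      ∃ u v x y z : List T, w = u ++ v ++ x ++ y ++ z ∧
        v.length + x.length + y.length ≤ P ∧ 1 ≤ v.length + y.length ∧
        (u ++ x ++ z) ∈ g.language := by
  classical
  set m : ℕ := 2 + g.rules.sup (fun r => r.output.length) with hm_def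
  have hm1 : 1 ≤ m := by omega
  have hrules : ∀ r ∈ g.rules, r.output.length ≤ m := by
    intro r hr
    have h := Finset.le_sup (f := fun r : ContextFreeRule T g.NT => r.output.length) hr
    omega
  set K : ℕ := (inputs g).card with hK_def
  refine ⟨m ^ (K + 1), Nat.one_le_pow _ _ (by omega), ?_⟩
  intro w hwL hwlen
  have hder : g.Derives [Symbol.nonterminal g.initial] (w.map Symbol.terminal) :=
    (mem_language_iff g w).1 hwL
  obtain ⟨n, dn⟩ := derives_iff_derivesIn.1 hder
  have hex : ∃ k, ∃ f : PF g [Symbol.nonterminal g.initial] w, f.size = k :=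
    ⟨n, PF.complete n _ w dn⟩
  set n₀ := Nat.find hex with hn₀_def
  obtain ⟨f₀, hf₀⟩ := Nat.find_spec hex
  -- height is large
  have hlen₀ := PF.len_le hm1 hrules f₀
  have hht₀ : K + 1 ≤ f₀.ht := by
    by_contra hcon
    push_neg at hcon
    have : m ^ f₀.ht ≤ m ^ (K + 1) := Nat.pow_le_pow_right (by omega) (by omega)
    simp only [List.length_singleton, one_mul] at hlen₀
    omega
  obtain ⟨C₁, a, b, w₁, c₀, hC₁, hw, d0, f₁, hsz1, hht1⟩ :=
    down n₀ f₀ hf₀ (K + 1) (by omega) hht₀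
  have hw₁len : w₁.length ≤ m ^ (K + 1) := by
    have := PF.len_le hm1 hrules f₁
    simpa [hht1] using this
  have hfound := findRepeat f₁.size ∅ hC₁ (Finset.empty_subset _)
    (Finset.notMem_empty _) f₁ rfl (by rw [hht1, Finset.card_empty])
  cases hfound with
  | inr hp => obtain ⟨B, hB, -⟩ := hp; exact absurd hB (Finset.notMem_empty _)
  | inl hp =>
    obtain ⟨B, a₁, v, x, y, b₁, c₁, c₂, c₃, hw1, d₁, d₂, hc₂, d₃, hsum⟩ := hp
    refine ⟨a ++ a₁, v, x, y, b₁ ++ b, by simp [hw, hw1], ?_, ?_, ?_⟩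
    · have : w₁.length = a₁.length + v.length + x.length + y.length + b₁.length := by
        simp [hw1]; omega
      omega
    · -- |v| + |y| ≥ 1, else we find a smaller tree
      by_contra hcon
      push_neg at hcon
      have hv : v = [] := List.length_eq_zero_iff.mp (by omega)
      have hy : y = [] := List.length_eq_zero_iff.mp (by omega)
      subst hv hy
      have d₁' : DerivesIn g [Symbol.nonterminal C₁]
          (a₁.map Symbol.terminal ++ [Symbol.nonterminal B] ++ b₁.map Symbol.terminal) c₁ := d₁
      have d₂' : DerivesIn g [Symbol.nonterminal B]
          [Symbol.nonterminal B] c₂ := by simpa using d₂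
      -- derivation of w of size n₀ - c₂ < n₀
      have dinner : DerivesIn g [Symbol.nonterminal C₁] (w₁.map Symbol.terminal) (c₁ + c₃) := by
        have lift₃ := (d₃.append_left (a₁.map Symbol.terminal)).append_right
          (b₁.map Symbol.terminal)
        have := d₁'.trans (by simpa [List.append_assoc] using lift₃)
        simpa [hw1, List.append_assoc] using this
      have dfull : DerivesIn g [Symbol.nonterminal g.initial]
          (w.map Symbol.terminal) (c₀ + (c₁ + c₃)) := by
        have lift := (dinner.append_left (a.map Symbol.terminal)).append_right
          (b.map Symbol.terminal)
        have := d0.trans (by simpa [List.append_assoc] using lift)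
        simpa [hw, List.append_assoc] using this
      obtain ⟨fsmall, hfsmall⟩ := PF.complete _ _ _ dfull
      have hmin : n₀ ≤ c₀ + (c₁ + c₃) := Nat.find_min' hex ⟨fsmall, hfsmall⟩
      omega
    · -- membership of the shrunken word
      rw [mem_language_iff]
      have D0 := d0.toDerives
      have D1 := ((d₁.toDerives.append_left (a.map Symbol.terminal)).append_right
        (b.map Symbol.terminal))
      have D3 := ((d₃.toDerives.append_left
          (a.map Symbol.terminal ++ a₁.map Symbol.terminal)).append_right
        (b₁.map Symbol.terminal ++ b.map Symbol.terminal))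
      have step1 : g.Derives [Symbol.nonterminal g.initial]
          (a.map Symbol.terminal ++ a₁.map Symbol.terminal ++ [Symbol.nonterminal B] ++
            (b₁.map Symbol.terminal ++ b.map Symbol.terminal)) := by
        have := D0.trans D1
        simpa [List.append_assoc] using this
      have final := step1.trans D3
      simpa [List.map_append, List.append_assoc] using final

end Pump

namespace Good

open FreeMonoid

/-- A witness pair of words for the pumping contradiction. -/
def GoodAt {Y : Type} {M : Type*} [Monoid M] (φ : FreeMonoid Y →* M) (p : ℕ) : Prop :=
  ∃ u x : FreeMonoid Y,
    φ (u * x) = 1 ∧ p < u.length ∧ p < x.length ∧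
    (∀ u' : FreeMonoid Y, φ (u' * x) = 1 → u.length ≤ u'.length) ∧
    (∀ x' : FreeMonoid Y, φ (u * x') = 1 → x.length ≤ x'.length)

section Bicyclic

variable {M : Type*} [Monoid M] {a b : M}

lemma apow_bpow (hab : a * b = 1) : ∀ n : ℕ, a ^ n * b ^ n = 1
  | 0 => by simp
  | n + 1 => by
      have h := apow_bpow hab n
      calc a ^ (n+1) * b ^ (n+1) = a * a ^ n * (b ^ n * b) := by
            rw [pow_succ' a n, pow_succ b n]
        _ = a * (a ^ n * b ^ n) * b := by simp [mul_assoc]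
        _ = a * b := by rw [h]; simp
        _ = 1 := hab

lemma bpow_ne_one (hab : a * b = 1) (ha : ∀ k : ℕ, a ^ (k + 1) ≠ 1) (k : ℕ) :
    b ^ (k + 1) ≠ 1 := by
  intro hb
  have hab' : a = b ^ k := by
    calc a = a * b ^ (k+1) := by rw [hb, mul_one]
      _ = (a * b) * b ^ k := by rw [pow_succ' b k, ← mul_assoc]
      _ = b ^ k := by rw [hab, one_mul]
  have : a ^ (k + 1) = 1 := by
    rw [hab', ← pow_mul]
    have : k * (k + 1) = (k + 1) * k := Nat.mul_comm _ _
    rw [this, pow_mul, hb, one_pow]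
  exact ha k this

lemma a_mul_bpow (hab : a * b = 1) {n : ℕ} (hn : 1 ≤ n) : a * b ^ n = b ^ (n - 1) := by
  obtain ⟨m, rfl⟩ := Nat.exists_eq_add_of_le hn
  calc a * b ^ (1 + m) = (a * b) * b ^ m := by rw [pow_add, pow_one, ← mul_assoc]
    _ = b ^ m := by rw [hab, one_mul]
    _ = b ^ (1 + m - 1) := by simp

lemma apow_mul_bpow (hab : a * b = 1) : ∀ (j n : ℕ), j ≤ n → a ^ j * b ^ n = b ^ (n - j)
  | 0, n, _ => by simp
  | j + 1, n, hj => by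
      have hn1 : 1 ≤ n := le_trans (by omega) hj
      calc a ^ (j+1) * b ^ n = a ^ j * (a * b ^ n) := by
            rw [pow_succ a j]; simp [mul_assoc]
        _ = a ^ j * b ^ (n - 1) := by rw [a_mul_bpow hab hn1]
        _ = b ^ (n - 1 - j) := apow_mul_bpow hab j (n-1) (by omega)
        _ = b ^ (n - (j+1)) := by congr 1; omega

lemma apow_mul_b (hab : a * b = 1) {n : ℕ} (hn : 1 ≤ n) : a ^ n * b = a ^ (n - 1) := by
  obtain ⟨m, rfl⟩ := Nat.exists_eq_add_of_le hn
  calc a ^ (1 + m) * b = a ^ m * (a * b) := by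
        rw [Nat.add_comm, pow_succ a m]; simp [mul_assoc]
    _ = a ^ m := by rw [hab, mul_one]
    _ = a ^ (1 + m - 1) := by simp

lemma apow_mul_bpow' (hab : a * b = 1) : ∀ (i n : ℕ), i ≤ n → a ^ n * b ^ i = a ^ (n - i)
  | 0, n, _ => by simp
  | i + 1, n, hi => by
      calc a ^ n * b ^ (i+1) = (a ^ n * b ^ i) * b := by rw [pow_succ b i, mul_assoc]
        _ = a ^ (n - i) * b := by rw [apow_mul_bpow' hab i n (by omega)]
        _ = a ^ (n - i - 1) := apow_mul_b hab (by omega)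
        _ = a ^ (n - (i+1)) := by rw [Nat.sub_sub]

/-- Every word over `{a, b}` evaluates to `b^i * a^j` with `i + j ≤` its length. -/
lemma word_normal_form (hab : a * b = 1) (w : List Bool) :
    ∃ i j : ℕ, i + j ≤ w.length ∧
      (FreeMonoid.lift (fun t : Bool => if t then a else b)) (FreeMonoid.ofList w)
        = b ^ i * a ^ j := by
  induction w using List.reverseRecOn with
  | nil => exact ⟨0, 0, by simp, by simp⟩
  | append_singleton w t ih =>
      obtain ⟨i, j, hij, hw⟩ := ih
      have hsplit : FreeMonoid.ofList (w ++ [t]) = FreeMonoid.ofList w * FreeMonoid.of t := by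
        rw [FreeMonoid.ofList_append, FreeMonoid.ofList_singleton]
      cases t with
      | true =>
          refine ⟨i, j + 1, by simp; omega, ?_⟩
          rw [hsplit, map_mul, hw, FreeMonoid.lift_eval_of]
          simp [pow_succ, mul_assoc]
      | false =>
          cases j with
          | zero =>
              refine ⟨i + 1, 0, by simp; omega, ?_⟩
              rw [hsplit, map_mul, hw, FreeMonoid.lift_eval_of]
              simp [pow_succ, mul_assoc]
          | succ k =>
              refine ⟨i, k, by simp; omega, ?_⟩
              rw [hsplit, map_mul, hw, FreeMonoid.lift_eval_of]
              simp only [if_neg Bool.false_ne_true]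
              rw [mul_assoc, apow_mul_b hab (by omega)]
              simp

lemma eval_replicate (hab : a * b = 1) (t : Bool) (n : ℕ) :
    (FreeMonoid.lift (fun t : Bool => if t then a else b))
      (FreeMonoid.ofList (List.replicate n t)) = (if t then a else b) ^ n := by
  rw [FreeMonoid.lift_ofList, List.map_replicate, List.prod_replicate]

lemma goodAt_case1 (hab : a * b = 1) (ha : ∀ k : ℕ, a ^ (k + 1) ≠ 1) (p : ℕ) :
    GoodAt (FreeMonoid.lift (fun t : Bool => if t then a else b)) p := by
  have hφu : FreeMonoid.lift (fun t : Bool => if t then a else b)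
      (FreeMonoid.ofList (List.replicate (p+1) true)) = a ^ (p+1) := by
    simpa using eval_replicate (a := a) (b := b) hab true (p+1)
  have hφx : FreeMonoid.lift (fun t : Bool => if t then a else b)
      (FreeMonoid.ofList (List.replicate (p+1) false)) = b ^ (p+1) := by
    simpa using eval_replicate (a := a) (b := b) hab false (p+1)
  set φ := FreeMonoid.lift (fun t : Bool => if t then a else b) with hφ
  set u : FreeMonoid Bool := FreeMonoid.ofList (List.replicate (p+1) true) with hu
  set x : FreeMonoid Bool := FreeMonoid.ofList (List.replicate (p+1) false) with hx
  have hulen : u.length = p + 1 := List.length_replicate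
  have hxlen : x.length = p + 1 := List.length_replicate
  refine ⟨u, x, ?_, by omega, by omega, ?_, ?_⟩
  · rw [map_mul, hφu, hφx]; exact apow_bpow hab (p+1)
  · intro u' h1
    by_contra hcon
    push_neg at hcon
    obtain ⟨i, j, hij, hval⟩ := word_normal_form hab (FreeMonoid.toList u')
    rw [FreeMonoid.ofList_toList] at hval
    have hlen' : i + j ≤ p := by
      have : (FreeMonoid.toList u').length = u'.length := rfl
      omega
    rw [map_mul, hval, hφx] at h1
    have : b ^ i * a ^ j * b ^ (p+1) = b ^ (i + (p + 1 - j)) := by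
      rw [mul_assoc, apow_mul_bpow hab j (p+1) (by omega), ← pow_add]
    rw [this] at h1
    have he : i + (p + 1 - j) = (i + (p - j)) + 1 := by omega
    rw [he] at h1
    exact bpow_ne_one hab ha _ h1
  · intro x' h1
    by_contra hcon
    push_neg at hcon
    obtain ⟨i, j, hij, hval⟩ := word_normal_form hab (FreeMonoid.toList x')
    rw [FreeMonoid.ofList_toList] at hval
    have hlen' : i + j ≤ p := by
      have : (FreeMonoid.toList x').length = x'.length := rfl
      omega
    rw [map_mul, hval, hφu] at h1
    have : a ^ (p+1) * (b ^ i * a ^ j) = a ^ ((p + 1 - i) + j) := by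
      rw [← mul_assoc, apow_mul_bpow' hab i (p+1) (by omega), ← pow_add]
    rw [this] at h1
    have he : (p + 1 - i) + j = ((p - i) + j) + 1 := by omega
    rw [he] at h1
    exact ha _ h1

end Bicyclic

section Torsion

variable {M : Type*} [Monoid M]

lemma goodAt_case2 (htor : ∀ a b : M, a * b = 1 → ∃ k : ℕ, a ^ (k + 1) = 1)
    (N : Submonoid M) (S : Finset M) (hS : Submonoid.closure (S : Set M) = N)
    (hinf : ¬ {a : ↥N | ∃ b : ↥N, a * b = 1}.Finite) :
    ∃ (Y : Type) (_ : Fintype Y) (φ : FreeMonoid Y →* M), ∀ p : ℕ, GoodAt φ p := by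
  classical
  refine ⟨Fin S.card, inferInstance,
    FreeMonoid.lift (fun i : Fin S.card => ((S.equivFin.symm i : S) : M)), ?_⟩
  set Y := Fin S.card with hY
  set φ : FreeMonoid Y →* M :=
    FreeMonoid.lift (fun i : Y => ((S.equivFin.symm i : S) : M)) with hφ
  -- surjectivity onto N
  have hsurj : ∀ m : M, m ∈ N → ∃ w : FreeMonoid Y, φ w = m := by
    intro m hm
    rw [← hS] at hm
    induction hm using Submonoid.closure_induction with
    | mem z hz => exact ⟨FreeMonoid.of (S.equivFin ⟨z, hz⟩), by simp [hφ]⟩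
    | one => exact ⟨1, map_one φ⟩
    | mul z₁ z₂ hz₁ hz₂ ih₁ ih₂ =>
        obtain ⟨w₁, hw₁⟩ := ih₁
        obtain ⟨w₂, hw₂⟩ := ih₂
        exact ⟨w₁ * w₂, by rw [map_mul, hw₁, hw₂]⟩
  -- the infinite set of right invertibles in M
  set A : Set M := Subtype.val '' {a : ↥N | ∃ b : ↥N, a * b = 1} with hA
  have hAinf : A.Infinite := by
    intro hAfin
    apply hinf
    have hpre := Set.Finite.preimage (f := (Subtype.val : ↥N → M))
      (Subtype.val_injective.injOn) hAfin
    exact hpre.subset fun a ha => Set.mem_preimage.2 ⟨a, ha, rfl⟩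
  -- two-sided inverse function
  set g : M → M := fun m => if h : ∃ c, m * c = 1 ∧ c * m = 1 then h.choose else 1 with hg
  have hkey : ∀ m ∈ A, ∃ k : ℕ, m ^ (k+1) = 1 ∧ m ∈ N := by
    rintro m ⟨a, ⟨b, hb⟩, rfl⟩
    have : (a : M) * (b : M) = 1 := by
      have := congrArg (Subtype.val) hb
      simpa using this
    obtain ⟨k, hk⟩ := htor _ _ this
    exact ⟨k, hk, a.2⟩
  have hgspec : ∀ m ∈ A, m * g m = 1 ∧ g m * m = 1 := by
    intro m hm
    obtain ⟨k, hk, -⟩ := hkey m hm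
    have hex : ∃ c, m * c = 1 ∧ c * m = 1 :=
      ⟨m ^ k, by rw [← pow_succ' m k]; exact hk, by rw [← pow_succ m k]; exact hk⟩
    rw [hg]; simp only [dif_pos hex]
    exact hex.choose_spec
  have hgN : ∀ m ∈ A, g m ∈ N := by
    intro m hm
    obtain ⟨k, hk, hmN⟩ := hkey m hm
    obtain ⟨h1, h2⟩ := hgspec m hm
    have : g m = m ^ k := by
      calc g m = g m * 1 := (mul_one _).symm
        _ = g m * (m * m ^ k) := by rw [← pow_succ' m k, hk]
        _ = (g m * m) * m ^ k := (mul_assoc _ _ _).symm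
        _ = m ^ k := by rw [h2, one_mul]
    rw [this]
    exact pow_mem hmN k
  have hginj : Set.InjOn g A := by
    intro m hm m' hm' heq
    obtain ⟨h1, h2⟩ := hgspec m hm
    obtain ⟨h1', h2'⟩ := hgspec m' hm'
    calc m = m * 1 := (mul_one _).symm
      _ = m * (g m' * m') := by rw [h2', mul_one]
      _ = m * (g m * m') := by rw [heq]
      _ = (m * g m) * m' := (mul_assoc _ _ _).symm
      _ = m' := by rw [h1, one_mul]
  intro p
  -- the finite set of elements with short words
  have hWfin : (φ '' {w : FreeMonoid Y | w.length ≤ p}).Finite :=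
    Set.Finite.image φ (List.finite_length_le Y p)
  set W : Set M := φ '' {w : FreeMonoid Y | w.length ≤ p} with hW
  have hA'fin : (A ∩ g ⁻¹' W).Finite := by
    apply Set.Finite.of_finite_image _ (hginj.mono Set.inter_subset_left)
    exact hWfin.subset (by rintro y ⟨m, ⟨-, hmW⟩, rfl⟩; exact hmW)
  obtain ⟨m, hmA, hmbad⟩ := (hAinf.diff (hWfin.union hA'fin)).nonempty
  rw [Set.mem_union] at hmbad
  push_neg at hmbad
  obtain ⟨hmW, hmA'⟩ := hmbad
  have hgmW : g m ∉ W := fun h => hmA' ⟨hmA, h⟩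
  obtain ⟨hginv1, hginv2⟩ := hgspec m hmA
  obtain ⟨-, -, hmN⟩ := hkey m hmA
  -- minimal words
  have hExu : ∃ n : ℕ, ∃ w : FreeMonoid Y, w.length = n ∧ φ w = m := by
    obtain ⟨w, hw⟩ := hsurj m hmN
    exact ⟨w.length, w, rfl, hw⟩
  have hExx : ∃ n : ℕ, ∃ w : FreeMonoid Y, w.length = n ∧ φ w = g m := by
    obtain ⟨w, hw⟩ := hsurj (g m) (hgN m hmA)
    exact ⟨w.length, w, rfl, hw⟩
  obtain ⟨u, hulen, hum⟩ := Nat.find_spec hExu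
  obtain ⟨x, hxlen, hxm⟩ := Nat.find_spec hExx
  refine ⟨u, x, by rw [map_mul, hum, hxm]; exact hginv1, ?_, ?_, ?_, ?_⟩
  · by_contra hcon
    push_neg at hcon
    exact hmW ⟨u, hcon, hum⟩
  · by_contra hcon
    push_neg at hcon
    exact hgmW ⟨x, hcon, hxm⟩
  · intro u' h1
    have hval : φ u' = m := by
      calc φ u' = φ u' * 1 := (mul_one _).symm
        _ = φ u' * (φ x * m) := by rw [hxm, hginv2]
        _ = (φ u' * φ x) * m := (mul_assoc _ _ _).symm
        _ = m := by rw [← map_mul, h1, one_mul]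
    have := Nat.find_min' hExu ⟨u', rfl, hval⟩
    omega
  · intro x' h1
    have hmx : m * φ x' = 1 := by rw [← hum, ← map_mul]; exact h1
    have hval : φ x' = g m := by
      calc φ x' = 1 * φ x' := (one_mul _).symm
        _ = (g m * m) * φ x' := by rw [hginv2]
        _ = g m * (m * φ x') := mul_assoc _ _ _
        _ = g m := by rw [hmx, mul_one]
    have := Nat.find_min' hExx ⟨x', rfl, hval⟩
    omega

end Torsion

end Good

section Assembly

open FreeMonoid

variable {M₀ M₁ : Type*} [Monoid M₀] [Monoid M₁]

theorem not_cf {Y0 Y1 : Type} [Fintype Y0] [Fintype Y1]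
    (φ₀ : FreeMonoid Y0 →* M₀) (φ₁ : FreeMonoid Y1 →* M₁)
    (h0 : ∀ p, Good.GoodAt φ₀ p) (h1 : ∀ p, Good.GoodAt φ₁ p) :
    ∃ (X : Type) (_ : Fintype X) (L : Language X),
      VA (M₀ × M₁) L ∧ ¬ L.IsContextFree := by
  classical
  set X : Type := (Y0 ⊕ Y1) × Bool with hX
  -- the class of a letter
  set cls : X → Fin 4 := fun s =>
    match s with
    | (Sum.inl _, false) => 0
    | (Sum.inr _, false) => 1
    | (Sum.inl _, true) => 2
    | (Sum.inr _, true) => 3 with hcls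
  -- the DFA recognizing sorted-class words
  set D : DFA X (Option (Fin 4)) :=
    { step := fun s a =>
        match s with
        | none => none
        | some c => if c ≤ cls a then some (cls a) else none
      start := some 0
      accept := {s | s.isSome} } with hD
  set R : Language X := D.accepts with hR
  -- projections
  set π0 : FreeMonoid X →* FreeMonoid Y0 :=
    FreeMonoid.lift (fun s : X => Sum.elim (fun y => FreeMonoid.of y) (fun _ => 1) s.1) with hπ0
  set π1 : FreeMonoid X →* FreeMonoid Y1 :=
    FreeMonoid.lift (fun s : X => Sum.elim (fun _ => 1) (fun y => FreeMonoid.of y) s.1) with hπ1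
  set Φ : FreeMonoid X →* M₀ × M₁ := (φ₀.comp π0).prod (φ₁.comp π1) with hΦ
  set L : Language X :=
    (fun w => FreeMonoid.toList ((MonoidHom.id (FreeMonoid X)) w)) ''
      {w : FreeMonoid X | FreeMonoid.toList w ∈ R ∧ Φ w = 1} with hL
  have hmemL : ∀ l : List X, l ∈ L ↔ l ∈ R ∧ Φ (FreeMonoid.ofList l) = 1 := by
    intro l
    constructor
    · rintro ⟨w, ⟨hwR, hwφ⟩, rfl⟩
      exact ⟨hwR, by rwa [FreeMonoid.ofList_toList]⟩
    · rintro ⟨hlR, hlφ⟩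
      exact ⟨FreeMonoid.ofList l, ⟨hlR, hlφ⟩, rfl⟩
  refine ⟨X, inferInstance, L, ⟨X, inferInstance, R, Φ, MonoidHom.id _,
    ⟨Option (Fin 4), inferInstance, D, rfl⟩, hL⟩, ?_⟩
  -- length bookkeeping for projections
  have hlenproj : ∀ w : FreeMonoid X, (π0 w).length + (π1 w).length = w.length := by
    intro w
    induction w using FreeMonoid.inductionOn' with
    | one => simp
    | of_mul x xs ih =>
        obtain ⟨s, b⟩ := x
        cases s with
        | inl y =>
            have e0 : π0 (FreeMonoid.of ((Sum.inl y, b) : X)) = FreeMonoid.of y := by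
              rw [hπ0]; rfl
            have e1 : π1 (FreeMonoid.of ((Sum.inl y, b) : X)) = 1 := by
              rw [hπ1]; rfl
            rw [map_mul, map_mul, e0, e1, FreeMonoid.length_mul, FreeMonoid.length_mul,
              FreeMonoid.length_mul]
            simp only [FreeMonoid.length_of, FreeMonoid.length_one]
            omega
        | inr y =>
            have e0 : π0 (FreeMonoid.of ((Sum.inr y, b) : X)) = 1 := by
              rw [hπ0]; rfl
            have e1 : π1 (FreeMonoid.of ((Sum.inr y, b) : X)) = FreeMonoid.of y := by
              rw [hπ1]; rfl
            rw [map_mul, map_mul, e0, e1, FreeMonoid.length_mul, FreeMonoid.length_mul,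
              FreeMonoid.length_mul]
            simp only [FreeMonoid.length_of, FreeMonoid.length_one]
            omega
  -- DFA facts
  have evalBlock : ∀ (l : List X) (c : Fin 4), (∀ a ∈ l, cls a = c) → ∀ c0 : Fin 4, c0 ≤ c →
      ∃ c', D.evalFrom (some c0) l = some c' ∧ c' ≤ c := by
    intro l
    induction l with
    | nil => exact fun c _ c0 hc0 => ⟨c0, rfl, hc0⟩
    | cons a l ih =>
        intro c hcl c0 hc0
        have ha : cls a = c := hcl a (List.mem_cons_self)
        have hstep : D.step (some c0) a = some c := by
          show (if c0 ≤ cls a then some (cls a) else none) = some c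
          rw [ha, if_pos hc0]
        have h1 : D.evalFrom (some c0) [a] = some c := by
          rw [DFA.evalFrom_singleton]; exact hstep
        have heval : D.evalFrom (some c0) (a :: l) = D.evalFrom (some c) l := by
          rw [show (a :: l) = [a] ++ l from rfl, DFA.evalFrom_of_append, h1]
        rw [heval]
        exact ih c (fun b hb => hcl b (List.mem_cons_of_mem _ hb)) c le_rfl
  intro hCF
  obtain ⟨g, hg⟩ := hCF
  obtain ⟨P, hP1, hpump⟩ := Pump.shrink g
  obtain ⟨α, ar, hα1, hαlen, harlen, hminαL, hminαR⟩ := h0 P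
  obtain ⟨β, br, hβ1, hβlen, hbrlen, hminβL, hminβR⟩ := h1 P
  -- encodings of the four blocks
  set A0 : List X := (FreeMonoid.toList α).map (fun y => ((Sum.inl y, false) : X)) with hA0
  set B0 : List X := (FreeMonoid.toList β).map (fun y => ((Sum.inr y, false) : X)) with hB0
  set A1 : List X := (FreeMonoid.toList ar).map (fun y => ((Sum.inl y, true) : X)) with hA1
  set B1 : List X := (FreeMonoid.toList br).map (fun y => ((Sum.inr y, true) : X)) with hB1
  -- list-level projections
  set q0 : List X → FreeMonoid Y0 := fun l => π0 (FreeMonoid.ofList l) with hq0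
  set q1 : List X → FreeMonoid Y1 := fun l => π1 (FreeMonoid.ofList l) with hq1
  have hq0app : ∀ l₁ l₂ : List X, q0 (l₁ ++ l₂) = q0 l₁ * q0 l₂ := by
    intro l₁ l₂; simp only [hq0]; rw [FreeMonoid.ofList_append, map_mul]
  have hq1app : ∀ l₁ l₂ : List X, q1 (l₁ ++ l₂) = q1 l₁ * q1 l₂ := by
    intro l₁ l₂; simp only [hq1]; rw [FreeMonoid.ofList_append, map_mul]
  have hqlen : ∀ l : List X, (q0 l).length + (q1 l).length = l.length := by
    intro l
    have := hlenproj (FreeMonoid.ofList l)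
    exact this
  -- projections of the blocks
  have htag0 : ∀ (γ : FreeMonoid Y0) (b : Bool),
      q0 ((FreeMonoid.toList γ).map (fun y => ((Sum.inl y, b) : X))) = γ ∧
      q1 ((FreeMonoid.toList γ).map (fun y => ((Sum.inl y, b) : X))) = 1 := by
    intro γ b
    induction γ using FreeMonoid.inductionOn' with
    | one => constructor <;> rfl
    | of_mul y ys ih =>
        have hsplit : (FreeMonoid.toList (FreeMonoid.of y * ys)).map
            (fun y => ((Sum.inl y, b) : X)) =
            [((Sum.inl y, b) : X)] ++ (FreeMonoid.toList ys).map (fun y => ((Sum.inl y, b) : X)) := by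
          rw [FreeMonoid.toList_of_mul]; simp
        constructor
        · rw [hsplit, hq0app, ih.1]
          have : q0 [((Sum.inl y, b) : X)] = FreeMonoid.of y := by
            simp only [hq0, FreeMonoid.ofList_singleton, hπ0]; rfl
          rw [this]
        · rw [hsplit, hq1app, ih.2]
          have : q1 [((Sum.inl y, b) : X)] = 1 := by
            simp only [hq1, FreeMonoid.ofList_singleton, hπ1]; rfl
          rw [this, one_mul]
  have htag1 : ∀ (γ : FreeMonoid Y1) (b : Bool),
      q1 ((FreeMonoid.toList γ).map (fun y => ((Sum.inr y, b) : X))) = γ ∧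
      q0 ((FreeMonoid.toList γ).map (fun y => ((Sum.inr y, b) : X))) = 1 := by
    intro γ b
    induction γ using FreeMonoid.inductionOn' with
    | one => constructor <;> rfl
    | of_mul y ys ih =>
        have hsplit : (FreeMonoid.toList (FreeMonoid.of y * ys)).map
            (fun y => ((Sum.inr y, b) : X)) =
            [((Sum.inr y, b) : X)] ++ (FreeMonoid.toList ys).map (fun y => ((Sum.inr y, b) : X)) := by
          rw [FreeMonoid.toList_of_mul]; simp
        constructor
        · rw [hsplit, hq1app, ih.1]
          have : q1 [((Sum.inr y, b) : X)] = FreeMonoid.of y := by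
            simp only [hq1, FreeMonoid.ofList_singleton, hπ1]; rfl
          rw [this]
        · rw [hsplit, hq0app, ih.2]
          have : q0 [((Sum.inr y, b) : X)] = 1 := by
            simp only [hq0, FreeMonoid.ofList_singleton, hπ0]; rfl
          rw [this, one_mul]
  -- projections of the four blocks
  have hq0A0 : q0 A0 = α := by rw [hA0]; exact (htag0 α false).1
  have hq1A0 : q1 A0 = 1 := by rw [hA0]; exact (htag0 α false).2
  have hq0B0 : q0 B0 = 1 := by rw [hB0]; exact (htag1 β false).2
  have hq1B0 : q1 B0 = β := by rw [hB0]; exact (htag1 β false).1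
  have hq0A1 : q0 A1 = ar := by rw [hA1]; exact (htag0 ar true).1
  have hq1A1 : q1 A1 = 1 := by rw [hA1]; exact (htag0 ar true).2
  have hq0B1 : q0 B1 = 1 := by rw [hB1]; exact (htag1 br true).2
  have hq1B1 : q1 B1 = br := by rw [hB1]; exact (htag1 br true).1
  -- block lengths
  have hlA0 : A0.length = α.length := by rw [hA0, List.length_map]; rfl
  have hlB0 : B0.length = β.length := by rw [hB0, List.length_map]; rfl
  have hlA1 : A1.length = ar.length := by rw [hA1, List.length_map]; rfl
  have hlB1 : B1.length = br.length := by rw [hB1, List.length_map]; rfl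
  -- classes of blocks
  have hclsA0 : ∀ a ∈ A0, cls a = 0 := by
    intro a ha; rw [hA0] at ha
    obtain ⟨yy, -, rfl⟩ := List.mem_map.1 ha; rfl
  have hclsB0 : ∀ a ∈ B0, cls a = 1 := by
    intro a ha; rw [hB0] at ha
    obtain ⟨yy, -, rfl⟩ := List.mem_map.1 ha; rfl
  have hclsA1 : ∀ a ∈ A1, cls a = 2 := by
    intro a ha; rw [hA1] at ha
    obtain ⟨yy, -, rfl⟩ := List.mem_map.1 ha; rfl
  have hclsB1 : ∀ a ∈ B1, cls a = 3 := by
    intro a ha; rw [hB1] at ha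
    obtain ⟨yy, -, rfl⟩ := List.mem_map.1 ha; rfl
  -- the witness word
  set wstar : List X := A0 ++ (B0 ++ (A1 ++ B1)) with hwstar
  have hwR : wstar ∈ R := by
    obtain ⟨c1, hc1, hc1le⟩ := evalBlock A0 0 hclsA0 0 le_rfl
    obtain ⟨c2, hc2, hc2le⟩ := evalBlock B0 1 hclsB0 c1 (le_trans hc1le (by decide))
    obtain ⟨c3, hc3, hc3le⟩ := evalBlock A1 2 hclsA1 c2 (le_trans hc2le (by decide))
    obtain ⟨c4, hc4, hc4le⟩ := evalBlock B1 3 hclsB1 c3 (le_trans hc3le (by decide))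
    rw [hR, DFA.mem_accepts]
    show (D.evalFrom (some 0) wstar).isSome = true
    rw [hwstar, DFA.evalFrom_of_append, hc1, DFA.evalFrom_of_append, hc2,
      DFA.evalFrom_of_append, hc3, hc4]
    rfl
  have hq0w : q0 wstar = α * ar := by
    rw [hwstar]
    simp only [hq0app, hq0A0, hq0B0, hq0A1, hq0B1, one_mul, mul_one]
  have hq1w : q1 wstar = β * br := by
    rw [hwstar]
    simp only [hq1app, hq1A0, hq1B0, hq1A1, hq1B1, one_mul, mul_one]
  have hwφ : Φ (FreeMonoid.ofList wstar) = 1 := by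
    rw [hΦ, MonoidHom.prod_apply, Prod.mk_eq_one]
    constructor
    · show φ₀ (q0 wstar) = 1
      rw [hq0w]; exact hα1
    · show φ₁ (q1 wstar) = 1
      rw [hq1w]; exact hβ1
  have hwmem : wstar ∈ g.language := by
    rw [hg]; exact (hmemL wstar).2 ⟨hwR, hwφ⟩
  have hwstarlen : wstar.length = A0.length + B0.length + A1.length + B1.length := by
    rw [hwstar]; simp [List.length_append]; omega
  have hwlong : P < wstar.length := by omega
  obtain ⟨u, v, x, y, z, hsplit, hwin, hvy, hmem'⟩ := hpump wstar hwmem hwlong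
  rw [hg] at hmem'
  obtain ⟨-, hφuxz⟩ := (hmemL _).1 hmem'
  rw [hΦ, MonoidHom.prod_apply, Prod.mk_eq_one] at hφuxz
  have hc0 : φ₀ ((q0 u * q0 x) * q0 z) = 1 := by
    have h := hφuxz.1
    have h' : φ₀ (q0 (u ++ x ++ z)) = 1 := by
      simpa [hq0, MonoidHom.comp_apply] using h
    simpa only [hq0app] using h'
  have hc1 : φ₁ ((q1 u * q1 x) * q1 z) = 1 := by
    have h := hφuxz.2
    have h' : φ₁ (q1 (u ++ x ++ z)) = 1 := by
      simpa [hq1, MonoidHom.comp_apply] using h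
    simpa only [hq1app] using h'
  -- length facts for the case split
  have hsplitlen : wstar.length
      = u.length + v.length + x.length + y.length + z.length := by
    have := congrArg List.length hsplit
    simp only [List.length_append] at this
    omega
  have hlv := hqlen v
  have hly := hqlen y
  -- the three cases
  by_cases hcaseA : u.length + (v.length + x.length + y.length) ≤ A0.length + B0.length
  · -- window inside A0 ++ B0
    have E : (u ++ (v ++ (x ++ y))) ++ z = (A0 ++ B0) ++ (A1 ++ B1) := by
      have E' := hsplit
      rw [hwstar] at E'
      simp only [List.append_assoc] at E' ⊢
      exact E'.symm
    obtain ⟨m, hm1, hm2⟩ : ∃ m, (u ++ (v ++ (x ++ y))) ++ m = A0 ++ B0 ∧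
        z = m ++ (A1 ++ B1) := by
      rcases List.append_eq_append_iff.1 E with ⟨m, hm1, hm2⟩ | ⟨m, hm1, hm2⟩
      · exact ⟨m, hm1.symm, hm2⟩
      · have hlen := congrArg List.length hm1
        simp only [List.length_append] at hlen
        have hm0 : m = [] := List.length_eq_zero_iff.1 (by omega)
        subst hm0
        refine ⟨[], by simpa using hm1, by simpa using hm2.symm⟩
    have hq0z : q0 z = q0 m * ar := by
      rw [hm2]
      simp only [hq0app, hq0A1, hq0B1, mul_one]
    have hq1z : q1 z = q1 m * br := by
      rw [hm2]
      simp only [hq1app, hq1A1, hq1B1, one_mul]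
    have h₀ : φ₀ ((q0 u * (q0 x * q0 m)) * ar) = 1 := by
      have h := hc0
      rw [hq0z] at h
      have harg : (q0 u * q0 x) * (q0 m * ar) = (q0 u * (q0 x * q0 m)) * ar := by
        simp [mul_assoc]
      rwa [harg] at h
    have h₁ : φ₁ ((q1 u * (q1 x * q1 m)) * br) = 1 := by
      have h := hc1
      rw [hq1z] at h
      have harg : (q1 u * q1 x) * (q1 m * br) = (q1 u * (q1 x * q1 m)) * br := by
        simp [mul_assoc]
      rwa [harg] at h
    have hmin0 := hminαL _ h₀
    have hmin1 := hminβL _ h₁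
    simp only [FreeMonoid.length_mul] at hmin0 hmin1
    have e0 := congrArg q0 hm1
    have e1 := congrArg q1 hm1
    simp only [hq0app, hq0A0, hq0B0, mul_one] at e0
    simp only [hq1app, hq1A0, hq1B0, one_mul] at e1
    have el0 := congrArg FreeMonoid.length e0
    have el1 := congrArg FreeMonoid.length e1
    simp only [FreeMonoid.length_mul] at el0 el1
    omega
  · by_cases hcaseB : u.length + (v.length + x.length + y.length)
        ≤ A0.length + B0.length + A1.length
    · -- window inside B0 ++ A1
      have hu0 : A0.length ≤ u.length := by omega
      have E : u ++ (v ++ (x ++ (y ++ z))) = A0 ++ (B0 ++ (A1 ++ B1)) := by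
        have E' := hsplit
        rw [hwstar] at E'
        simp only [List.append_assoc] at E' ⊢
        exact E'.symm
      obtain ⟨u', hu1, hu2⟩ : ∃ u', u = A0 ++ u' ∧
          u' ++ (v ++ (x ++ (y ++ z))) = B0 ++ (A1 ++ B1) := by
        rcases List.append_eq_append_iff.1 E with ⟨m, hm1, hm2⟩ | ⟨m, hm1, hm2⟩
        · have hlen := congrArg List.length hm1
          simp only [List.length_append] at hlen
          have hm0 : m = [] := List.length_eq_zero_iff.1 (by omega)
          subst hm0
          exact ⟨[], by simpa using hm1.symm, by simpa using hm2⟩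
        · exact ⟨m, hm1, hm2.symm⟩
      have hulen' : u.length = A0.length + u'.length := by
        rw [hu1]; simp [List.length_append]
      have E2 : (u' ++ (v ++ (x ++ y))) ++ z = (B0 ++ A1) ++ B1 := by
        simp only [List.append_assoc] at hu2 ⊢
        exact hu2
      obtain ⟨m, hm1, hm2⟩ : ∃ m, (u' ++ (v ++ (x ++ y))) ++ m = B0 ++ A1 ∧
          z = m ++ B1 := by
        rcases List.append_eq_append_iff.1 E2 with ⟨m, hm1, hm2⟩ | ⟨m, hm1, hm2⟩
        · exact ⟨m, hm1.symm, hm2⟩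
        · have hlen := congrArg List.length hm1
          simp only [List.length_append] at hlen
          have hm0 : m = [] := List.length_eq_zero_iff.1 (by omega)
          subst hm0
          exact ⟨[], by simpa using hm1, by simpa using hm2.symm⟩
      have hq0u : q0 u = α * q0 u' := by
        rw [hu1]; simp only [hq0app, hq0A0]
      have hq1u : q1 u = q1 u' := by
        rw [hu1]; simp only [hq1app, hq1A0, one_mul]
      have hq0z : q0 z = q0 m := by
        rw [hm2]; simp only [hq0app, hq0B1, mul_one]
      have hq1z : q1 z = q1 m * br := by
        rw [hm2]; simp only [hq1app, hq1B1]
      have h₀ : φ₀ (α * (q0 u' * (q0 x * q0 m))) = 1 := by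
        have h := hc0
        rw [hq0u, hq0z] at h
        have harg : ((α * q0 u') * q0 x) * q0 m = α * (q0 u' * (q0 x * q0 m)) := by
          simp [mul_assoc]
        rwa [harg] at h
      have h₁ : φ₁ ((q1 u' * (q1 x * q1 m)) * br) = 1 := by
        have h := hc1
        rw [hq1u, hq1z] at h
        have harg : (q1 u' * q1 x) * (q1 m * br) = (q1 u' * (q1 x * q1 m)) * br := by
          simp [mul_assoc]
        rwa [harg] at h
      have hmin0 := hminαR _ h₀
      have hmin1 := hminβL _ h₁
      simp only [FreeMonoid.length_mul] at hmin0 hmin1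
      have e0 := congrArg q0 hm1
      have e1 := congrArg q1 hm1
      simp only [hq0app, hq0B0, hq0A1, one_mul] at e0
      simp only [hq1app, hq1B0, hq1A1, mul_one] at e1
      have el0 := congrArg FreeMonoid.length e0
      have el1 := congrArg FreeMonoid.length e1
      simp only [FreeMonoid.length_mul] at el0 el1
      omega
    · -- window inside A1 ++ B1
      have hu0 : A0.length + B0.length ≤ u.length := by omega
      have E : u ++ (v ++ (x ++ (y ++ z))) = (A0 ++ B0) ++ (A1 ++ B1) := by
        have E' := hsplit
        rw [hwstar] at E'
        simp only [List.append_assoc] at E' ⊢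
        exact E'.symm
      obtain ⟨m, hm1, hm2⟩ : ∃ m, u = (A0 ++ B0) ++ m ∧
          m ++ (v ++ (x ++ (y ++ z))) = A1 ++ B1 := by
        rcases List.append_eq_append_iff.1 E with ⟨m, hm1, hm2⟩ | ⟨m, hm1, hm2⟩
        · have hlen := congrArg List.length hm1
          simp only [List.length_append] at hlen
          have hm0 : m = [] := List.length_eq_zero_iff.1 (by omega)
          subst hm0
          exact ⟨[], by simpa using hm1.symm, by simpa using hm2⟩
        · exact ⟨m, hm1, hm2.symm⟩
      have hq0u : q0 u = α * q0 m := by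
        rw [hm1]; simp only [hq0app, hq0A0, hq0B0, mul_one]
      have hq1u : q1 u = β * q1 m := by
        rw [hm1]; simp only [hq1app, hq1A0, hq1B0, one_mul]
      have h₀ : φ₀ (α * (q0 m * (q0 x * q0 z))) = 1 := by
        have h := hc0
        rw [hq0u] at h
        have harg : ((α * q0 m) * q0 x) * q0 z = α * (q0 m * (q0 x * q0 z)) := by
          simp [mul_assoc]
        rwa [harg] at h
      have h₁ : φ₁ (β * (q1 m * (q1 x * q1 z))) = 1 := by
        have h := hc1
        rw [hq1u] at h
        have harg : ((β * q1 m) * q1 x) * q1 z = β * (q1 m * (q1 x * q1 z)) := by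
          simp [mul_assoc]
        rwa [harg] at h
      have hmin0 := hminαR _ h₀
      have hmin1 := hminβR _ h₁
      simp only [FreeMonoid.length_mul] at hmin0 hmin1
      have e0 := congrArg q0 hm2
      have e1 := congrArg q1 hm2
      simp only [hq0app, hq0A1, hq0B1, mul_one] at e0
      simp only [hq1app, hq1A1, hq1B1, one_mul] at e1
      have el0 := congrArg FreeMonoid.length e0
      have el1 := congrArg FreeMonoid.length e1
      simp only [FreeMonoid.length_mul] at el0 el1
      omega

end Assembly

lemma exists_good (M : Type*) [Monoid M] (hM : ¬ IsFRI M) :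
    ∃ (Y : Type) (_ : Fintype Y) (φ : FreeMonoid Y →* M), ∀ p, Good.GoodAt φ p := by
  by_cases hc : ∃ a b : M, a * b = 1 ∧ ∀ k : ℕ, a ^ (k + 1) ≠ 1
  · obtain ⟨a, b, hab, ha⟩ := hc
    exact ⟨Bool, inferInstance, FreeMonoid.lift (fun t : Bool => if t then a else b),
      fun p => Good.goodAt_case1 hab ha p⟩
  · push_neg at hc
    unfold IsFRI at hM
    push_neg at hM
    obtain ⟨N, hNfg, hinf⟩ := hM
    obtain ⟨S, hS⟩ := hNfg
    exact Good.goodAt_case2 hc N S hS hinf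

/-- If neither `M₀` nor `M₁` is an FRI-monoid, then some language in
`VA (M₀ × M₁)` is not context-free. -/
theorem stmt8 (M₀ M₁ : Type*) [Monoid M₀] [Monoid M₁]
    (h₀ : ¬ IsFRI M₀) (h₁ : ¬ IsFRI M₁) :
    ∃ (X : Type) (_ : Fintype X) (L : Language X),
      VA (M₀ × M₁) L ∧ ¬ L.IsContextFree := by
  obtain ⟨Y0, hF0, φ₀, hgood0⟩ := exists_good M₀ h₀
  obtain ⟨Y1, hF1, φ₁, hgood1⟩ := exists_good M₁ h₁
  exact not_cf φ₀ φ₁ hgood0 hgood1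

end Paper
end

section
/- Let M be a monoid such that every language in VA(M) (over every finite alphabet) is semilinear, and let ℤ denote the (multiplicatively written) group of integers. Then every language in VA(M × ℤ) is semilinear. -/
namespace Paper

open Classical in
/-- The Parikh image of a word: the multiset counting occurrences of each letter. -/
noncomputable def parikh {X : Type} (w : List X) : X → ℕ := fun x => w.count x

/-- A linear subset of `X^⊕`. -/
def IsLinearSet {X : Type} (S : Set (X → ℕ)) : Prop :=
  ∃ (α₀ : X → ℕ) (n : ℕ) (α : Fin n → X → ℕ),
    S = {β | ∃ m : Fin n → ℕ, β = α₀ + ∑ i, m i • α i}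

/-- A semilinear subset of `X^⊕`: a finite union of linear sets. -/
def IsSemilinearSet {X : Type} (S : Set (X → ℕ)) : Prop :=
  ∃ (n : ℕ) (T : Fin n → Set (X → ℕ)), (∀ i, IsLinearSet (T i)) ∧ S = ⋃ i, T i

/-- A language is semilinear if its Parikh image is a semilinear set. -/
def LangSemilinear {X : Type} (L : Language X) : Prop := IsSemilinearSet (parikh '' L)

/-- union over a fintype of linear sets is semilinear -/
lemma sl_of_finite_linear {X ι : Type} [Fintype ι] (T : ι → Set (X → ℕ))
    (h : ∀ i, IsLinearSet (T i)) : IsSemilinearSet (⋃ i, T i) := by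
  refine ⟨Fintype.card ι, T ∘ (Fintype.equivFin ι).symm, fun i => h _, ?_⟩
  exact ((Fintype.equivFin ι).symm.surjective.iUnion_comp T).symm

lemma sl_iUnion {X ι : Type} [Fintype ι] (T : ι → Set (X → ℕ))
    (h : ∀ i, IsSemilinearSet (T i)) : IsSemilinearSet (⋃ i, T i) := by
  choose k U hU hT using h
  have : (⋃ i, T i) = ⋃ p : Σ i, Fin (k i), U p.1 p.2 := by
    rw [Set.iUnion_sigma]
    exact Set.iUnion_congr hT
  rw [this]
  exact sl_of_finite_linear _ fun p => hU p.1 p.2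

lemma IsLinearSet.semilinear {X : Type} {S : Set (X → ℕ)} (h : IsLinearSet S) :
    IsSemilinearSet S := ⟨1, fun _ => S, fun _ => h, (Set.iUnion_const S).symm⟩

section Maps
variable {ι Y X : Type} [Fintype ι]

def ev (c : ι → ℤ) : (ι → ℕ) →+ ℤ where
  toFun v := ∑ i, (v i : ℤ) * c i
  map_zero' := by simp
  map_add' u v := by
    simp [Pi.add_apply, add_mul, Finset.sum_add_distrib]

def comb (α : ι → Y → ℕ) : (ι → ℕ) →+ (Y → ℕ) where
  toFun m := ∑ i, m i • α i
  map_zero' := by simp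
  map_add' u v := by
    simp [Pi.add_apply, add_smul, Finset.sum_add_distrib]

lemma ev_comb (c : Y → ℤ) [Fintype Y] (α : ι → Y → ℕ) (m : ι → ℕ) :
    ev c (comb α m) = ∑ i, (m i : ℤ) * ev c (α i) := by
  show ev c (∑ i, m i • α i) = _
  rw [map_sum]
  refine Finset.sum_congr rfl fun i _ => ?_
  rw [map_nsmul, nsmul_eq_mul]

/-- image of a linear set under an affine map is linear -/
lemma IsLinearSet.image {S : Set (Y → ℕ)} (hS : IsLinearSet S)
    (F : (Y → ℕ) →+ (X → ℕ)) (c : X → ℕ) :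
    IsLinearSet ((fun v => c + F v) '' S) := by
  obtain ⟨α₀, n, α, rfl⟩ := hS
  refine ⟨c + F α₀, n, fun i => F (α i), ?_⟩
  ext γ
  constructor
  · rintro ⟨v, ⟨m, rfl⟩, rfl⟩
    refine ⟨m, ?_⟩
    show c + F (α₀ + ∑ i, m i • α i) = _
    rw [map_add, map_sum, add_assoc]
    congr 1
    congr 1
    exact Finset.sum_congr rfl fun i _ => map_nsmul F _ _
  · rintro ⟨m, rfl⟩
    refine ⟨α₀ + ∑ i, m i • α i, ⟨m, rfl⟩, ?_⟩
    show c + F (α₀ + ∑ i, m i • α i) = _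
    rw [map_add, map_sum, add_assoc]
    congr 1
    congr 1
    exact Finset.sum_congr rfl fun i _ => (map_nsmul F _ _)

lemma IsSemilinearSet.image {S : Set (Y → ℕ)} (hS : IsSemilinearSet S)
    (F : (Y → ℕ) →+ (X → ℕ)) (c : X → ℕ) :
    IsSemilinearSet ((fun v => c + F v) '' S) := by
  obtain ⟨n, T, hT, rfl⟩ := hS
  rw [Set.image_iUnion]
  exact sl_of_finite_linear _ fun i => (hT i).image F c

end Maps

section Dioph
variable {n : ℕ}

lemma sum_lt_sum_of_le_ne {u v : Fin n → ℕ} (hle : u ≤ v) (hne : u ≠ v) :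
    ∑ i, u i < ∑ i, v i := by
  obtain ⟨j, hj⟩ : ∃ j, u j ≠ v j := by
    by_contra h
    push_neg at h
    exact hne (funext h)
  exact Finset.sum_lt_sum (fun i _ => hle i) ⟨j, Finset.mem_univ j, lt_of_le_of_ne (hle j) hj⟩

/-- every element of a set in `ℕ^n` lies above a minimal element of that set -/
lemma exists_min (D : Set (Fin n → ℕ)) {d : Fin n → ℕ} (hd : d ∈ D) :
    ∃ u ∈ D, u ≤ d ∧ ∀ v ∈ D, v ≤ u → v = u := by
  obtain ⟨N, hN⟩ : ∃ N, ∑ i, d i ≤ N := ⟨_, le_rfl⟩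
  induction N generalizing d with
  | zero =>
    refine ⟨d, hd, le_rfl, fun v hv hvd => ?_⟩
    by_contra hne
    exact absurd (lt_of_lt_of_le (sum_lt_sum_of_le_ne hvd hne) hN) (by simp)
  | succ N ih =>
    by_cases hmin : ∀ v ∈ D, v ≤ d → v = d
    · exact ⟨d, hd, le_rfl, hmin⟩
    · push_neg at hmin
      obtain ⟨v, hv, hvd, hvne⟩ := hmin
      obtain ⟨u, hu, huv, humin⟩ := ih hv
        (Nat.le_of_lt_succ (lt_of_lt_of_le (sum_lt_sum_of_le_ne hvd hvne) hN))
      exact ⟨u, hu, le_trans huv hvd, humin⟩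

/-- the set of minimal elements is finite (Dickson's lemma) -/
lemma min_finite (D : Set (Fin n → ℕ)) :
    {u | u ∈ D ∧ ∀ v ∈ D, v ≤ u → v = u}.Finite := by
  have hp : ({u | u ∈ D ∧ ∀ v ∈ D, v ≤ u → v = u} : Set (Fin n → ℕ)).IsPWO :=
    Set.isPWO_of_wellQuasiOrderedLE _
  refine IsAntichain.finite_of_partiallyWellOrderedOn (r := (· ≤ ·)) ?_ hp
  rintro a ⟨ha, hamin⟩ b ⟨hb, hbmin⟩ hne hab
  exact hne (hbmin a ha hab)

/-- a finite set of vectors can be enumerated by `Fin q` -/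
lemma enum_of_finite {S : Set (Fin n → ℕ)} (hS : S.Finite) :
    ∃ (q : ℕ) (f : Fin q → Fin n → ℕ), ∀ x, x ∈ S ↔ ∃ i, f i = x := by
  classical
  refine ⟨hS.toFinset.toList.length, hS.toFinset.toList.get, fun x => ?_⟩
  rw [← Set.Finite.mem_toFinset hS, ← Finset.mem_toList, List.mem_iff_get]

lemma sub_add_cancel_pi {u h : Fin n → ℕ} (hle : u ≤ h) : (h - u) + u = h := by
  funext i
  exact Nat.sub_add_cancel (hle i)

lemma ev_sub {c : Fin n → ℤ} {u h : Fin n → ℕ} (hle : u ≤ h) :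
    ev c (h - u) = ev c h - ev c u := by
  have := map_add (ev c) (h - u) u
  rw [sub_add_cancel_pi hle] at this
  omega

/-- the solution set of a linear Diophantine equation over ℕ is semilinear -/
lemma dioph_semilinear (c : Fin n → ℤ) (b : ℤ) :
    IsSemilinearSet {m : Fin n → ℕ | ev c m = b} := by
  set H : Set (Fin n → ℕ) := {h | ev c h = 0} with hH
  set D : Set (Fin n → ℕ) := {m | ev c m = b} with hD
  -- generators of H
  obtain ⟨p, β, hβ⟩ := enum_of_finite (min_finite {h | h ∈ H ∧ h ≠ 0})
  have hβH : ∀ i, β i ∈ H := by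
    intro i
    have : β i ∈ {u | u ∈ {h | h ∈ H ∧ h ≠ 0} ∧ _} := (hβ (β i)).2 ⟨i, rfl⟩
    exact this.1.1
  -- every element of H is a ℕ-combination of the β's
  have hgen : ∀ h ∈ H, ∃ m : Fin p → ℕ, h = ∑ i, m i • β i := by
    intro h hh
    obtain ⟨N, hN⟩ : ∃ N, ∑ i, h i ≤ N := ⟨_, le_rfl⟩
    induction N generalizing h with
    | zero =>
      refine ⟨0, ?_⟩
      have : h = 0 := by
        funext i
        have : ∑ j, h j = 0 := Nat.le_zero.mp hN
        have := Finset.sum_eq_zero_iff.mp this i (Finset.mem_univ i)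
        exact this
      simp [this]
    | succ N ih =>
      by_cases h0 : h = 0
      · exact ⟨0, by simp [h0]⟩
      · obtain ⟨u, hu, huh, humin⟩ := exists_min {x | x ∈ H ∧ x ≠ 0} ⟨hh, h0⟩
        obtain ⟨i₀, hi₀⟩ := (hβ u).1 ⟨hu, humin⟩
        have hhu : h - u ∈ H := by
          rw [hH, Set.mem_setOf_eq, ev_sub huh, hh, hu.1]
          ring
        have hne : h - u ≠ h := by
          intro hcontra
          have := sub_add_cancel_pi huh
          rw [hcontra] at this
          have : u = 0 := by
            funext i
            have := congrFun this i
            simp only [Pi.add_apply, Pi.zero_apply] at this ⊢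
            omega
          exact hu.2 this
        have hsum : ∑ i, (h - u) i ≤ N := by
          have hle : (h - u) ≤ h := fun i => Nat.sub_le _ _
          have := sum_lt_sum_of_le_ne hle hne
          omega
        obtain ⟨m, hm⟩ := ih _ hhu hsum
        refine ⟨(m + Pi.single i₀ 1 : Fin p → ℕ), ?_⟩
        have : ∑ i, ((m + Pi.single i₀ 1 : Fin p → ℕ)) i • β i
            = (∑ i, m i • β i) + ∑ i, (Pi.single i₀ 1 : Fin p → ℕ) i • β i := by
          simp [Pi.add_apply, add_smul, Finset.sum_add_distrib]
        rw [this, ← hm]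
        have hsingle : ∑ i, (Pi.single i₀ 1 : Fin p → ℕ) i • β i = β i₀ := by
          rw [Finset.sum_eq_single i₀]
          · simp
          · intro j _ hj
            simp [Pi.single_apply, hj]
          · simp
        rw [hsingle, hi₀, sub_add_cancel_pi huh]
  -- minimal elements of D
  obtain ⟨q, γ, hγ⟩ := enum_of_finite (min_finite D)
  have hγD : ∀ j, γ j ∈ D := fun j => ((hγ (γ j)).2 ⟨j, rfl⟩).1
  -- decomposition
  have hdecomp : D = ⋃ j : Fin q, {β' | ∃ m : Fin p → ℕ, β' = γ j + ∑ i, m i • β i} := by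
    ext d
    simp only [Set.mem_iUnion, Set.mem_setOf_eq]
    constructor
    · intro hd
      obtain ⟨u, hu, hud, humin⟩ := exists_min D hd
      obtain ⟨j, hj⟩ := (hγ u).1 ⟨hu, humin⟩
      have hdu : d - u ∈ H := by
        rw [hH, Set.mem_setOf_eq, ev_sub hud, hd, hu]
        ring
      obtain ⟨m, hm⟩ := hgen _ hdu
      refine ⟨j, m, ?_⟩
      rw [hj, ← hm, add_comm, sub_add_cancel_pi hud]
    · rintro ⟨j, m, rfl⟩
      have hcomb : (∑ i, m i • β i) ∈ H := by
        rw [hH, Set.mem_setOf_eq, map_sum]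
        refine Finset.sum_eq_zero fun i _ => ?_
        rw [map_nsmul, hβH i, smul_zero]
      show ev c _ = b
      rw [map_add, hγD j, hcomb]
      ring
  rw [hdecomp]
  exact sl_of_finite_linear _ fun j => ⟨γ j, p, β, rfl⟩

end Dioph

section Inter
variable {Y : Type} [Fintype Y]

lemma linear_inter_dioph {S : Set (Y → ℕ)} (hS : IsLinearSet S) (c : Y → ℤ) :
    IsSemilinearSet (S ∩ {v | ev c v = 0}) := by
  obtain ⟨α₀, n, α, rfl⟩ := hS
  have hev : ∀ m : Fin n → ℕ, ev c (α₀ + comb α m)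
      = ev c α₀ + ev (fun i => ev c (α i)) m := by
    intro m
    rw [map_add, ev_comb]
    rfl
  have key : {β | ∃ m : Fin n → ℕ, β = α₀ + ∑ i, m i • α i} ∩ {v | ev c v = 0}
      = (fun m => α₀ + comb α m) ''
          {m : Fin n → ℕ | ev (fun i => ev c (α i)) m = -(ev c α₀)} := by
    ext v
    simp only [Set.mem_inter_iff, Set.mem_setOf_eq, Set.mem_image]
    constructor
    · rintro ⟨⟨m, rfl⟩, hv⟩
      refine ⟨m, ?_, rfl⟩
      have : ev c (α₀ + comb α m) = 0 := hv
      rw [hev] at this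
      omega
    · rintro ⟨m, hm, rfl⟩
      exact ⟨⟨m, rfl⟩, show ev c (α₀ + comb α m) = 0 by rw [hev, hm]; ring⟩
  rw [key]
  exact (dioph_semilinear _ _).image (comb α) α₀

lemma semilinear_inter_dioph {S : Set (Y → ℕ)} (hS : IsSemilinearSet S) (c : Y → ℤ) :
    IsSemilinearSet (S ∩ {v | ev c v = 0}) := by
  obtain ⟨n, T, hT, rfl⟩ := hS
  rw [Set.iUnion_inter]
  exact sl_iUnion _ fun i => linear_inter_dioph (hT i) c

end Inter

lemma parikh_nil {Y : Type} : parikh ([] : List Y) = 0 := by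
  funext x
  simp [parikh]

lemma parikh_append {Y : Type} (l₁ l₂ : List Y) :
    parikh (l₁ ++ l₂) = parikh l₁ + parikh l₂ := by
  funext x
  simp [parikh, List.count_append]

section ParikhLemmas
variable {Y X : Type} [Fintype Y]

open Classical in
lemma parikh_singleton_ite (y z : Y) : parikh [y] z = if y = z then 1 else 0 := by
  simp [parikh, List.count_singleton']

open Classical in
lemma ev_parikh_singleton (c : Y → ℤ) (y : Y) : ev c (parikh [y]) = c y := by
  show ∑ z, ((parikh [y] z : ℕ) : ℤ) * c z = c y
  have : ∀ z, ((parikh [y] z : ℕ) : ℤ) * c z = if y = z then c z else 0 := by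
    intro z
    rw [parikh_singleton_ite]
    split <;> simp
  simp only [this]
  simp [Finset.sum_ite_eq]

open Classical in
lemma comb_parikh_singleton (a : Y → X → ℕ) (y : Y) : comb a (parikh [y]) = a y := by
  show ∑ z, parikh [y] z • a z = a y
  have : ∀ z, parikh [y] z • a z = if y = z then a z else 0 := by
    intro z
    rw [parikh_singleton_ite]
    split <;> simp
  simp only [this]
  simp [Finset.sum_ite_eq]

lemma toAdd_eq_ev (ψ : FreeMonoid Y →* Multiplicative ℤ) (l : List Y) :
    Multiplicative.toAdd (ψ (FreeMonoid.ofList l))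
      = ev (fun y => Multiplicative.toAdd (ψ (FreeMonoid.of y))) (parikh l) := by
  induction l with
  | nil =>
    rw [FreeMonoid.ofList_nil, map_one, parikh_nil, map_zero]
    simp
  | cons y l ih =>
    have : (y :: l) = [y] ++ l := rfl
    rw [this, FreeMonoid.ofList_append, map_mul, parikh_append, map_add, toAdd_mul, ih,
      FreeMonoid.ofList_singleton, ev_parikh_singleton]

lemma parikh_hom (h : FreeMonoid Y →* FreeMonoid X) (l : List Y) :
    parikh (FreeMonoid.toList (h (FreeMonoid.ofList l)))
      = comb (fun y => parikh (FreeMonoid.toList (h (FreeMonoid.of y)))) (parikh l) := by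
  induction l with
  | nil =>
    rw [FreeMonoid.ofList_nil, map_one, FreeMonoid.toList_one, parikh_nil, parikh_nil, map_zero]
  | cons y l ih =>
    have : (y :: l) = [y] ++ l := rfl
    rw [this, FreeMonoid.ofList_append, map_mul, FreeMonoid.toList_mul, parikh_append,
      parikh_append, map_add, ih, FreeMonoid.ofList_singleton, comb_parikh_singleton]

end ParikhLemmas


/-- If every language in `VA M` is semilinear, then every language in
`VA (M × ℤ)` is semilinear (with `ℤ` written multiplicatively). -/
theorem stmt10 (M : Type*) [Monoid M]
    (hM : ∀ (X : Type) (_ : Fintype X) (L : Language X), VA M L → LangSemilinear L) :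
    ∀ (X : Type) (_ : Fintype X) (L : Language X),
      VA (M × Multiplicative ℤ) L → LangSemilinear L := by
  intro X _ L hL
  obtain ⟨Y, hY, R, φ, h, hR, hLdef⟩ := hL
  haveI := hY
  set φ₁ : FreeMonoid Y →* M := (MonoidHom.fst M (Multiplicative ℤ)).comp φ with hφ₁
  set φ₂ : FreeMonoid Y →* Multiplicative ℤ := (MonoidHom.snd M (Multiplicative ℤ)).comp φ
    with hφ₂
  set L' : Language Y := {l | l ∈ R ∧ φ₁ (FreeMonoid.ofList l) = 1} with hL'
  -- L' is accepted by a valence automaton over M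
  have hVA : VA M L' := by
    refine ⟨Y, hY, R, φ₁, MonoidHom.id _, hR, ?_⟩
    ext l
    constructor
    · rintro ⟨hl, hφ⟩
      exact ⟨FreeMonoid.ofList l, ⟨hl, hφ⟩, rfl⟩
    · rintro ⟨w, ⟨hw, hφ⟩, rfl⟩
      exact ⟨hw, hφ⟩
  have hsl' : LangSemilinear L' := hM Y hY L' hVA
  -- the data of the reduction
  set a : Y → X → ℕ := fun y => parikh (FreeMonoid.toList (h (FreeMonoid.of y))) with ha
  set c : Y → ℤ := fun y => Multiplicative.toAdd (φ₂ (FreeMonoid.of y)) with hc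
  have key : parikh '' L = (fun v => (0 : X → ℕ) + comb a v) ''
      ((parikh '' L') ∩ {v | ev c v = 0}) := by
    ext u
    constructor
    · rintro ⟨lx, hlx, rfl⟩
      rw [hLdef] at hlx
      obtain ⟨w, ⟨hwR, hwφ⟩, rfl⟩ := hlx
      have hw1 : φ₁ w = 1 := by rw [hφ₁]; simp [MonoidHom.comp_apply, hwφ]
      have hw2 : φ₂ w = 1 := by rw [hφ₂]; simp [MonoidHom.comp_apply, hwφ]
      refine ⟨parikh (FreeMonoid.toList w), ⟨⟨FreeMonoid.toList w, ⟨hwR, ?_⟩, rfl⟩, ?_⟩, ?_⟩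
      · rwa [FreeMonoid.ofList_toList]
      · show ev c (parikh (FreeMonoid.toList w)) = 0
        rw [← toAdd_eq_ev φ₂ (FreeMonoid.toList w), FreeMonoid.ofList_toList, hw2]
        rfl
      · show 0 + comb a (parikh (FreeMonoid.toList w)) = parikh (FreeMonoid.toList (h w))
        rw [zero_add]
        exact (parikh_hom h (FreeMonoid.toList w)).symm
    · rintro ⟨v, ⟨⟨l, ⟨hlR, hlφ₁⟩, rfl⟩, hvK⟩, rfl⟩
      have hφ₂1 : φ₂ (FreeMonoid.ofList l) = 1 := by
        have h0 : Multiplicative.toAdd (φ₂ (FreeMonoid.ofList l)) = 0 := by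
          rw [toAdd_eq_ev φ₂ l]
          exact hvK
        have := congrArg (Multiplicative.ofAdd) h0
        simpa using this
      have hφtot : φ (FreeMonoid.ofList l) = 1 := by
        have h1 : (φ (FreeMonoid.ofList l)).1 = 1 := hlφ₁
        have h2 : (φ (FreeMonoid.ofList l)).2 = 1 := hφ₂1
        exact Prod.ext h1 h2
      have hmem : FreeMonoid.toList (h (FreeMonoid.ofList l)) ∈ L := by
        rw [hLdef]
        exact ⟨FreeMonoid.ofList l, ⟨hlR, hφtot⟩, rfl⟩
      refine ⟨FreeMonoid.toList (h (FreeMonoid.ofList l)), hmem, ?_⟩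
      rw [parikh_hom h l]
      show comb a (parikh l) = 0 + comb a (parikh l)
      rw [zero_add]
  show IsSemilinearSet (parikh '' L)
  rw [key]
  exact (semilinear_inter_dioph hsl' c).image (comb a) 0


end Paper
end

section
/- Let N₀, N₁, M₀, M₁ be monoids such that for each i ∈ {0,1} and every finite alphabet X, every language over X in VA(N_i) also lies in VA(M_i). Then for every finite alphabet X, every language over X in VA(N₀ × N₁) also lies in VA(M₀ × M₁). -/
namespace Paper

/-- If `VA N_i ⊆ VA M_i` for `i ∈ {0,1}`, then
`VA (N₀ × N₁) ⊆ VA (M₀ × M₁)`. -/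
theorem stmt11 (N₀ N₁ M₀ M₁ : Type*) [Monoid N₀] [Monoid N₁] [Monoid M₀] [Monoid M₁]
    (h₀ : ∀ (X : Type) (_ : Fintype X) (L : Language X), VA N₀ L → VA M₀ L)
    (h₁ : ∀ (X : Type) (_ : Fintype X) (L : Language X), VA N₁ L → VA M₁ L) :
    ∀ (X : Type) (_ : Fintype X) (L : Language X),
      VA (N₀ × N₁) L → VA (M₀ × M₁) L := by
  intro X fX L hVA
  obtain ⟨Y, fY, R, φ, h, hR, hL⟩ := hVA
  set φ₀ := (MonoidHom.fst N₀ N₁).comp φ with hφ₀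
  set φ₁ := (MonoidHom.snd N₀ N₁).comp φ with hφ₁
  have hVA1 : VA N₀ ((fun w : FreeMonoid Y => FreeMonoid.toList (MonoidHom.id (FreeMonoid Y) w)) ''
      {w : FreeMonoid Y | FreeMonoid.toList w ∈ R ∧ φ₀ w = 1}) :=
    ⟨Y, fY, R, φ₀, MonoidHom.id _, hR, rfl⟩
  obtain ⟨Z, fZ, R', ψ, g, hR', hL1⟩ := h₀ Y fY _ hVA1
  have hVA2 : VA N₁ ((fun v : FreeMonoid Z => FreeMonoid.toList (MonoidHom.id (FreeMonoid Z) v)) ''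
      {v : FreeMonoid Z | FreeMonoid.toList v ∈ R' ∧ φ₁.comp g v = 1}) :=
    ⟨Z, fZ, R', φ₁.comp g, MonoidHom.id _, hR', rfl⟩
  obtain ⟨Z', fZ', R'', ψ', g', hR'', hL2⟩ := h₁ Z fZ _ hVA2
  refine ⟨Z', fZ', R'', (ψ.comp g').prod ψ', h.comp (g.comp g'), hR'', ?_⟩
  subst hL
  ext x
  constructor
  · rintro ⟨w, ⟨hwR, hw1⟩, rfl⟩
    have hw0 : φ₀ w = 1 := by rw [hφ₀]; simp [hw1]
    have hw1' : φ₁ w = 1 := by rw [hφ₁]; simp [hw1]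
    have hmem : FreeMonoid.toList w ∈
        (fun w : FreeMonoid Y => FreeMonoid.toList (MonoidHom.id (FreeMonoid Y) w)) ''
        {w : FreeMonoid Y | FreeMonoid.toList w ∈ R ∧ φ₀ w = 1} := ⟨w, ⟨hwR, hw0⟩, rfl⟩
    rw [hL1] at hmem
    obtain ⟨v, ⟨hvR, hv1⟩, hv⟩ := hmem
    have hgv : g v = w := FreeMonoid.toList.injective hv
    have hmem2 : FreeMonoid.toList v ∈
        (fun v : FreeMonoid Z => FreeMonoid.toList (MonoidHom.id (FreeMonoid Z) v)) ''
        {v : FreeMonoid Z | FreeMonoid.toList v ∈ R' ∧ φ₁.comp g v = 1} := by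
      refine ⟨v, ⟨hvR, ?_⟩, rfl⟩
      simp [hgv, hw1']
    rw [hL2] at hmem2
    obtain ⟨u, ⟨huR, hu1⟩, hu⟩ := hmem2
    have hgu : g' u = v := FreeMonoid.toList.injective hu
    refine ⟨u, ⟨huR, ?_⟩, ?_⟩
    · have : ψ (g' u) = 1 := by rw [hgu]; exact hv1
      show ((ψ.comp g').prod ψ') u = 1
      simp [MonoidHom.prod_apply, this, hu1, Prod.ext_iff]
    · show FreeMonoid.toList (h (g (g' u))) = FreeMonoid.toList (h w)
      rw [hgu, hgv]
  · rintro ⟨u, ⟨huR, hu1⟩, rfl⟩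
    have hψgu : ψ (g' u) = 1 := by
      have := congrArg Prod.fst hu1
      simpa using this
    have hψ'u : ψ' u = 1 := by
      have := congrArg Prod.snd hu1
      simpa using this
    have hmem2 : FreeMonoid.toList (g' u) ∈
        (fun v : FreeMonoid Z => FreeMonoid.toList (MonoidHom.id (FreeMonoid Z) v)) ''
        {v : FreeMonoid Z | FreeMonoid.toList v ∈ R' ∧ φ₁.comp g v = 1} := by
      rw [hL2]; exact ⟨u, ⟨huR, hψ'u⟩, rfl⟩
    obtain ⟨v, ⟨hvR, hv1⟩, hv⟩ := hmem2
    have hgv : v = g' u := FreeMonoid.toList.injective hv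
    subst hgv
    have hmem : FreeMonoid.toList (g (g' u)) ∈
        (fun w : FreeMonoid Y => FreeMonoid.toList (MonoidHom.id (FreeMonoid Y) w)) ''
        {w : FreeMonoid Y | FreeMonoid.toList w ∈ R ∧ φ₀ w = 1} := by
      rw [hL1]; exact ⟨g' u, ⟨hvR, hψgu⟩, rfl⟩
    obtain ⟨w, ⟨hwR, hw0⟩, hw⟩ := hmem
    have hww : w = g (g' u) := FreeMonoid.toList.injective hw
    subst hww
    refine ⟨g (g' u), ⟨hwR, ?_⟩, rfl⟩
    have h1 : (φ (g (g' u))).1 = 1 := hw0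
    have h2 : (φ (g (g' u))).2 = 1 := hv1
    exact Prod.ext h1 h2

end Paper
end
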